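/- If T is a tree in the family F with n_1 leaves, then F_t(T) = n_1. -/

import Mathlib

/-! Basic definitions: (zero) forcing, total forcing, forcing numbers. -/

namespace TotalForcing

variable {V : Type*}

/-- The set of vertices eventually colored by the forcing process starting from `S`:
a vertex is colored if it is in `S`, or if some colored vertex `u` is adjacent to it
while all other neighbors of `u` are already colored (so `v` is the unique
non-colored neighbor of `u`, and `u` forces `v`). -/
inductive Forces (G : SimpleGraph V) (S : Set V) : V → Prop
  | mem : ∀ {v : V}, v ∈ S → Forces G S v
  | force : ∀ {u v : V}, G.Adj u v → Forces G S u →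
      (∀ w, G.Adj u w → w ≠ v → Forces G S w) → Forces G S v

/-- `S` is a forcing set of `G` if the forcing process colors every vertex. -/
def IsForcingSet (G : SimpleGraph V) (S : Set V) : Prop := ∀ v : V, Forces G S v

/-- A total forcing set is a forcing set inducing a subgraph without isolated vertices. -/
def IsTotalForcingSet (G : SimpleGraph V) (S : Set V) : Prop :=
  IsForcingSet G S ∧ ∀ v ∈ S, ∃ u ∈ S, G.Adj v u

/-- The forcing number `F(G)`. -/
noncomputable def forcingNumber (G : SimpleGraph V) [Fintype V] : ℕ :=
  sInf {n : ℕ | ∃ S : Finset V, S.card = n ∧ IsForcingSet G ↑S}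

/-- The total forcing number `F_t(G)`. -/
noncomputable def totalForcingNumber (G : SimpleGraph V) [Fintype V] : ℕ :=
  sInf {n : ℕ | ∃ S : Finset V, S.card = n ∧ IsTotalForcingSet G ↑S}

/-- A leaf is a vertex of degree 1. -/
def IsLeaf (G : SimpleGraph V) (v : V) : Prop := (G.neighborSet v).ncard = 1

/-- The number of leaves of `G`. -/
noncomputable def numLeaves (G : SimpleGraph V) : ℕ := {v : V | IsLeaf G v}.ncard

/-- A strong support vertex is a vertex with at least two leaf neighbors. -/
def IsStrongSupport (G : SimpleGraph V) (v : V) : Prop :=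
  ∃ x y : V, x ≠ y ∧ G.Adj v x ∧ G.Adj v y ∧ IsLeaf G x ∧ IsLeaf G y

end TotalForcing

namespace TotalForcing

/-- Operation `𝒪₁`: subdivide the edge `uv` once (the new vertex is `none`). -/
def subdivide1 {V : Type*} (G : SimpleGraph V) (u v : V) : SimpleGraph (Option V) :=
  SimpleGraph.fromRel (fun x y =>
    (∃ a b : V, x = some a ∧ y = some b ∧ G.Adj a b ∧
      ¬(a = u ∧ b = v) ∧ ¬(a = v ∧ b = u)) ∨
    (x = none ∧ (y = some u ∨ y = some v)))

/-- Operation `𝒪₂`: add one new pendant edge at `v` (the new leaf is `none`). -/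
def addLeaf {V : Type*} (G : SimpleGraph V) (v : V) : SimpleGraph (Option V) :=
  SimpleGraph.fromRel (fun x y =>
    (∃ a b : V, x = some a ∧ y = some b ∧ G.Adj a b) ∨ (x = none ∧ y = some v))

/-- Operation `𝒪₃`: add two new pendant edges at `v`. -/
def addTwoLeaves {V : Type*} (G : SimpleGraph V) (v : V) : SimpleGraph (V ⊕ Fin 2) :=
  SimpleGraph.fromRel (fun x y =>
    (∃ a b : V, x = Sum.inl a ∧ y = Sum.inl b ∧ G.Adj a b) ∨
    (∃ t : Fin 2, x = Sum.inl v ∧ y = Sum.inr t))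

/-- Operation `𝒪₄`: add a new path on three vertices `inr 0 – inr 1 – inr 2` and join
`v` to its central vertex `inr 1`. -/
def addP3 {V : Type*} (G : SimpleGraph V) (v : V) : SimpleGraph (V ⊕ Fin 3) :=
  SimpleGraph.fromRel (fun x y =>
    (∃ a b : V, x = Sum.inl a ∧ y = Sum.inl b ∧ G.Adj a b) ∨
    (x = Sum.inr 1 ∧ (y = Sum.inr 0 ∨ y = Sum.inr 2 ∨ y = Sum.inl v)))

/-- Operation `𝒪₅`: add six new vertices `u₁ = inr 0`, `v₁ = inr 1`, `v₂ = inr 2`,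
`v₃ = inr 3`, `v₄ = inr 4`, `u₃ = inr 5` with edges `v₁u₁, v₁v₂, v₂v₃, v₃v₄, v₃u₃`
(a star `K_{1,3}` with one edge subdivided twice), and join `v` to `v₁`. -/
def addSubdividedStar {V : Type*} (G : SimpleGraph V) (v : V) :
    SimpleGraph (V ⊕ Fin 6) :=
  SimpleGraph.fromRel (fun x y =>
    (∃ a b : V, x = Sum.inl a ∧ y = Sum.inl b ∧ G.Adj a b) ∨
    (x = Sum.inr 1 ∧ (y = Sum.inr 0 ∨ y = Sum.inr 2 ∨ y = Sum.inl v)) ∨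
    (x = Sum.inr 3 ∧ (y = Sum.inr 2 ∨ y = Sum.inr 4 ∨ y = Sum.inr 5)))

/-- The family `ℱ`: the smallest family of graphs (up to isomorphism) containing the
path `P₂` and closed under the operations `𝒪₁`–`𝒪₅`. -/
inductive InFamilyF : {V : Type} → SimpleGraph V → Prop
  | base : InFamilyF (SimpleGraph.pathGraph 2)
  | iso {V W : Type} {G : SimpleGraph V} {H : SimpleGraph W} :
      InFamilyF G → G ≃g H → InFamilyF H
  | op1 {V : Type} {G : SimpleGraph V} (u v : V) : InFamilyF G → G.Adj u v →
      ((G.neighborSet u).ncard ≤ 2 ∨ (G.neighborSet v).ncard ≤ 2) →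
      InFamilyF (subdivide1 G u v)
  | op2 {V : Type} {G : SimpleGraph V} (v : V) : InFamilyF G →
      IsStrongSupport G v → InFamilyF (addLeaf G v)
  | op3 {V : Type} {G : SimpleGraph V} (w v : V) : InFamilyF G →
      IsStrongSupport G w → G.Adj w v → IsLeaf G v → InFamilyF (addTwoLeaves G v)
  | op4 {V : Type} {G : SimpleGraph V} (v : V) : InFamilyF G →
      2 ≤ (G.neighborSet v).ncard → InFamilyF (addP3 G v)
  | op5 {V : Type} {G : SimpleGraph V} (v : V) : InFamilyF G →
      2 ≤ (G.neighborSet v).ncard → InFamilyF (addSubdividedStar G v)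

variable {V : Type*} {G : SimpleGraph V} {S : Set V}

/-- Reachable colored sets of the forcing process. -/
inductive Reach (G : SimpleGraph V) (S : Set V) : Set V → Prop
  | init : Reach G S S
  | step {C : Set V} {u v : V} : Reach G S C → u ∈ C → G.Adj u v → v ∉ C →
      (∀ w, G.Adj u w → w ≠ v → w ∈ C) → Reach G S (insert v C)

lemma Reach.subset_left (h : Reach G S C) : S ⊆ C := by
  induction h with
  | init => exact le_refl _
  | step _ _ _ _ _ ih => exact ih.trans (Set.subset_insert _ _)

lemma Reach.exists_rank (h : Reach G S C) :
    ∃ (f : V → V) (r : V → ℕ) (t : ℕ), (∀ x ∈ C, r x < t) ∧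
      ∀ x ∈ C, x ∉ S → f x ∈ C ∧ G.Adj (f x) x ∧ r (f x) < r x ∧
        (∀ w, G.Adj (f x) w → w ≠ x → (w ∈ C ∧ r w < r x)) := by
  classical
  induction h with
  | init =>
      exact ⟨id, fun _ => 0, 1, fun _ _ => Nat.zero_lt_one, fun x hx hx' => by
        exact absurd hx hx'⟩
  | @step C u v hC hu hadj hv hall ih =>
      obtain ⟨f, r, t, hrt, hmain⟩ := ih
      refine ⟨Function.update f v u, Function.update r v t, t + 1, ?_, ?_⟩
      · rintro x (rfl | hx)
        · simp
        · rw [Function.update_of_ne (ne_of_mem_of_not_mem hx hv)]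
          exact (hrt x hx).trans (Nat.lt_succ_self t)
      · rintro x (rfl | hx) hxS
        · rw [Function.update_self, Function.update_self]
          have huv : u ≠ x := ne_of_mem_of_not_mem hu hv
          rw [Function.update_of_ne huv]
          refine ⟨Set.mem_insert_of_mem _ hu, hadj, hrt u hu, ?_⟩
          intro w hw hwx
          have hwC := hall w hw hwx
          rw [Function.update_of_ne (ne_of_mem_of_not_mem hwC hv)]
          exact ⟨Set.mem_insert_of_mem _ hwC, hrt w hwC⟩
        · have hxv : x ≠ v := ne_of_mem_of_not_mem hx hv
          obtain ⟨h1, h2, h3, h4⟩ := hmain x hx hxS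
          have hfxv : f x ≠ v := ne_of_mem_of_not_mem h1 hv
          rw [Function.update_of_ne hxv, Function.update_of_ne hfxv,
            Function.update_of_ne hxv]
          refine ⟨Set.mem_insert_of_mem _ h1, h2, h3, ?_⟩
          intro w hw hwx
          obtain ⟨hwC, hwr⟩ := h4 w hw hwx
          rw [Function.update_of_ne (ne_of_mem_of_not_mem hwC hv)]
          exact ⟨Set.mem_insert_of_mem _ hwC, hwr⟩

lemma Reach.mem_of_forces {C : Set V} (hC : Reach G S C)
    (hmax : ∀ D, Reach G S D → D.ncard ≤ C.ncard) [Finite V] :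
    ∀ x, Forces G S x → x ∈ C := by
  intro x hx
  induction hx with
  | mem h => exact hC.subset_left h
  | @force u v hadj hu hall ihu ihall =>
      by_cases hv : v ∈ C
      · exact hv
      · exfalso
        have h2 : Reach G S (insert v C) := hC.step ihu hadj hv (fun w hw hwv => ihall w hw hwv)
        have := hmax _ h2
        rw [Set.ncard_insert_of_notMem hv C.toFinite] at this
        omega

/-- From a forcing set, extract forcer and rank functions on the whole vertex set. -/
lemma IsForcingSet.exists_forcer [Finite V] (hS : IsForcingSet G S) :
    ∃ (f : V → V) (r : V → ℕ),
      ∀ x, x ∉ S → G.Adj (f x) x ∧ r (f x) < r x ∧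
        (∀ w, G.Adj (f x) w → w ≠ x → r w < r x) := by
  classical
  have hbdd : BddAbove {n | ∃ C, Reach G S C ∧ C.ncard = n} := by
    refine ⟨Set.ncard (Set.univ : Set V), ?_⟩
    rintro n ⟨C, _, rfl⟩
    exact Set.ncard_le_ncard (Set.subset_univ C) Set.finite_univ
  have hne : {n | ∃ C, Reach G S C ∧ C.ncard = n}.Nonempty := ⟨S.ncard, S, Reach.init, rfl⟩
  obtain ⟨C, hC, hcard⟩ := Nat.sSup_mem hne hbdd
  have hmax : ∀ D, Reach G S D → D.ncard ≤ C.ncard := by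
    intro D hD
    rw [hcard]
    exact le_csSup hbdd ⟨D, hD, rfl⟩
  have hCuniv : ∀ x, x ∈ C := fun x => hC.mem_of_forces hmax x (hS x)
  obtain ⟨f, r, t, _, hmain⟩ := hC.exists_rank
  exact ⟨f, r, fun x hx => by
    obtain ⟨_, h2, h3, h4⟩ := hmain x (hCuniv x) hx
    exact ⟨h2, h3, fun w hw hwx => (h4 w hw hwx).2⟩⟩
lemma IsLeaf.eq_of_adj {x y z : V} (hx : IsLeaf G x) (h1 : G.Adj x y) (h2 : G.Adj x z) :
    y = z := by
  obtain ⟨w, hw⟩ := Set.ncard_eq_one.mp hx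
  have e1 : y ∈ G.neighborSet x := h1
  have e2 : z ∈ G.neighborSet x := h2
  rw [hw] at e1 e2
  rw [Set.mem_singleton_iff.mp e1, Set.mem_singleton_iff.mp e2]

section Lower

variable [Finite V]

lemma IsTotalForcingSet.leaf_pair_mem (hS : IsTotalForcingSet G S) {w x y : V}
    (hxy : x ≠ y) (hwx : G.Adj w x) (hwy : G.Adj w y) (hx : IsLeaf G x) (hy : IsLeaf G y) :
    x ∈ S ∨ y ∈ S := by
  by_contra h
  push_neg at h
  obtain ⟨hxS, hyS⟩ := h
  obtain ⟨f, r, hf⟩ := hS.1.exists_forcer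
  have hfx : f x = w := hx.eq_of_adj (hf x hxS).1.symm hwx.symm
  have hfy : f y = w := hy.eq_of_adj (hf y hyS).1.symm hwy.symm
  have h1 : r y < r x := (hf x hxS).2.2 y (by rw [hfx]; exact hwy) hxy.symm
  have h2 : r x < r y := (hf y hyS).2.2 x (by rw [hfy]; exact hwx) hxy
  omega

lemma IsTotalForcingSet.strongSupport_mem (hS : IsTotalForcingSet G S) {v : V}
    (hv : IsStrongSupport G v) : v ∈ S := by
  obtain ⟨x, y, hxy, hvx, hvy, hx, hy⟩ := hv
  have hor := hS.leaf_pair_mem hxy hvx hvy hx hy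
  have key : ∀ z, IsLeaf G z → G.Adj v z → z ∈ S → v ∈ S := by
    intro z hz hvz hzS
    obtain ⟨u, huS, hu⟩ := hS.2 z hzS
    rwa [← hz.eq_of_adj hu hvz.symm]
  rcases hor with h | h
  · exact key x hx hvx h
  · exact key y hy hvy h

/-- The fundamental lower bound: any total forcing set has at least as many
vertices as the graph has leaves. -/
lemma IsTotalForcingSet.numLeaves_le (hS : IsTotalForcingSet G S) :
    numLeaves G ≤ S.ncard := by
  classical
  obtain ⟨f, r, hf⟩ := hS.1.exists_forcer
  set R : V → V → Prop := fun a b => a ∉ S ∧ b = f a with hR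
  have hinj : ∀ a b, a ∉ S → b ∉ S → f a = f b → a = b := by
    intro a b ha hb hab
    by_contra hne
    have h1 : r b < r a := (hf a ha).2.2 b (by rw [hab]; exact (hf b hb).1) (Ne.symm hne)
    have h2 : r a < r b := (hf b hb).2.2 a (by rw [← hab]; exact (hf a ha).1) hne
    omega
  have hchain : ∀ x, ∃ s ∈ S, Relation.ReflTransGen R x s := by
    have main : ∀ n x, r x ≤ n → ∃ s ∈ S, Relation.ReflTransGen R x s := by
      intro n
      induction n with
      | zero =>
          intro x hx
          by_cases hxS : x ∈ S
          · exact ⟨x, hxS, Relation.ReflTransGen.refl⟩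
          · exact absurd ((hf x hxS).2.1.trans_le hx) (Nat.not_lt_zero _)
      | succ n ih =>
          intro x hx
          by_cases hxS : x ∈ S
          · exact ⟨x, hxS, Relation.ReflTransGen.refl⟩
          · obtain ⟨s, hs, hpath⟩ := ih (f x) (by have := (hf x hxS).2.1; omega)
            exact ⟨s, hs, Relation.ReflTransGen.head ⟨hxS, rfl⟩ hpath⟩
    exact fun x => main (r x) x le_rfl
  have hcomp : ∀ s x, Relation.ReflTransGen R x s → ∀ y, Relation.ReflTransGen R y s →
      Relation.ReflTransGen R x y ∨ Relation.ReflTransGen R y x := by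
    intro s x hx
    induction hx using Relation.ReflTransGen.head_induction_on with
    | refl => exact fun y hy => Or.inr hy
    | @head a a₁ hR1 hpath ih =>
        intro y hy
        rcases ih y hy with h | h
        · exact Or.inl (Relation.ReflTransGen.head hR1 h)
        · rcases Relation.ReflTransGen.cases_tail h with rfl | ⟨z, hyz, hz⟩
          · exact Or.inl (Relation.ReflTransGen.head hR1 Relation.ReflTransGen.refl)
          · have : z = a := hinj z a hz.1 hR1.1 (hz.2.symm.trans hR1.2)
            exact Or.inr (this ▸ hyz)
  have key : ∀ a b, IsLeaf G b → a ≠ b → Relation.ReflTransGen R a b → False := by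
    intro a b hbleaf hne hpath
    rcases Relation.ReflTransGen.cases_tail hpath with rfl | ⟨z, _, hz⟩
    · exact hne rfl
    ·
      have hzS : z ∉ S := hz.1
      have hfz : b = f z := hz.2
      have hadj : G.Adj b z := by rw [hfz]; exact (hf z hzS).1
      by_cases hbS : b ∈ S
      · obtain ⟨u, huS, hu⟩ := hS.2 b hbS
        have : u = z := hbleaf.eq_of_adj hu hadj
        exact hzS (this ▸ huS)
      · have hfb : f b = z := hbleaf.eq_of_adj (hf b hbS).1.symm hadj
        have h1 : r (f b) < r b := (hf b hbS).2.1
        have h2 : r (f z) < r z := (hf z hzS).2.1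
        rw [hfb] at h1
        rw [← hfz] at h2
        omega
  choose h hhS hhpath using hchain
  have hmaps : Set.MapsTo h {x | IsLeaf G x} S := fun x _ => hhS x
  have hinjOn : Set.InjOn h {x | IsLeaf G x} := by
    intro a ha b hb hab
    by_contra hne
    rcases hcomp (h a) a (hhpath a) b (hab ▸ hhpath b) with hp | hp
    · exact key a b hb hne hp
    · exact key b a ha (Ne.symm hne) hp
  calc numLeaves G = (h '' {x | IsLeaf G x}).ncard := (Set.ncard_image_of_injOn hinjOn).symm
    _ ≤ S.ncard := Set.ncard_le_ncard (hmaps.image_subset) S.toFinite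

end Lower
section IsoTransfer

variable {W : Type*} {H : SimpleGraph W}

lemma Forces.map (e : G ≃g H) {x : V} (h : Forces G S x) : Forces H (e '' S) (e x) := by
  induction h with
  | mem h => exact Forces.mem (Set.mem_image_of_mem _ h)
  | @force u x hadj hu hall ihu ihall =>
      refine Forces.force (u := e u) (e.map_adj_iff.mpr hadj) ihu ?_
      intro w' hw' hne
      have : H.Adj (e u) (e (e.symm w')) := by rwa [e.apply_symm_apply]
      have h2 := ihall (e.symm w') (e.map_adj_iff.mp this)
        (fun hc => hne (by rw [← hc, e.apply_symm_apply]))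
      rwa [e.apply_symm_apply] at h2
lemma IsTotalForcingSet.map (e : G ≃g H) (hS : IsTotalForcingSet G S) :
    IsTotalForcingSet H (e '' S) := by
  constructor
  · intro w
    have := (hS.1 (e.symm w)).map e
    rwa [e.apply_symm_apply] at this
  · rintro w ⟨s, hs, rfl⟩
    obtain ⟨t, htS, ht⟩ := hS.2 s hs
    exact ⟨e t, Set.mem_image_of_mem _ htS, e.map_adj_iff.mpr ht⟩

lemma isLeaf_map (e : G ≃g H) (x : V) : IsLeaf H (e x) ↔ IsLeaf G x := by
  have hset : H.neighborSet (e x) = e '' G.neighborSet x := by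
    ext w
    simp only [SimpleGraph.mem_neighborSet, Set.mem_image]
    constructor
    · intro hw
      refine ⟨e.symm w, ?_, e.apply_symm_apply w⟩
      have : H.Adj (e x) (e (e.symm w)) := by rwa [e.apply_symm_apply]
      exact e.map_adj_iff.mp this
    · rintro ⟨b, hb, rfl⟩
      exact e.map_adj_iff.mpr hb
  unfold IsLeaf
  rw [hset, Set.ncard_image_of_injective _ e.injective]

lemma numLeaves_map (e : G ≃g H) : numLeaves H = numLeaves G := by
  have hset : {w | IsLeaf H w} = e '' {x | IsLeaf G x} := by
    ext w
    simp only [Set.mem_setOf_eq, Set.mem_image]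
    constructor
    · intro hw
      exact ⟨e.symm w, (isLeaf_map e _).mp (by rwa [e.apply_symm_apply]), e.apply_symm_apply w⟩
    · rintro ⟨b, hb, rfl⟩
      exact (isLeaf_map e b).mpr hb
  unfold numLeaves
  rw [hset, Set.ncard_image_of_injective _ e.injective]

end IsoTransfer
section Op2

variable {v : V}

lemma addLeaf_adj_some_some {a b : V} :
    (addLeaf G v).Adj (some a) (some b) ↔ G.Adj a b := by
  simp only [addLeaf, SimpleGraph.fromRel_adj, ne_eq, Option.some.injEq]
  constructor
  · rintro ⟨hne, (⟨a', b', ha, hb, h⟩ | ⟨h, -⟩) | (⟨a', b', ha, hb, h⟩ | ⟨h, -⟩)⟩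
    · subst ha; subst hb; exact h
    · exact absurd h (by simp)
    · subst ha; subst hb; exact h.symm
    · exact absurd h (by simp)
  · intro h
    exact ⟨h.ne, Or.inl (Or.inl ⟨a, b, rfl, rfl, h⟩)⟩

lemma addLeaf_adj_none_some {b : V} :
    (addLeaf G v).Adj none (some b) ↔ b = v := by
  simp only [addLeaf, SimpleGraph.fromRel_adj, ne_eq]
  constructor
  · rintro ⟨hne, (⟨a', b', ha, hb, h⟩ | ⟨-, hb⟩) | (⟨a', b', ha, hb, h⟩ | ⟨h, -⟩)⟩
    · exact absurd ha (by simp)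
    · simpa using hb
    · exact absurd hb (by simp)
    · exact absurd h (by simp)
  · rintro rfl
    refine ⟨by simp, Or.inl (Or.inr ?_)⟩
    simp

lemma addLeaf_adj_none_none : ¬ (addLeaf G v).Adj none none := by
  simp [addLeaf, SimpleGraph.fromRel_adj]

lemma addLeaf_adj_cases {x y : Option V} (h : (addLeaf G v).Adj x y) :
    (∃ a b, x = some a ∧ y = some b ∧ G.Adj a b) ∨
    (x = none ∧ y = some v) ∨ (x = some v ∧ y = none) := by
  match x, y with
  | none, none => exact absurd h addLeaf_adj_none_none
  | none, some b => exact Or.inr (Or.inl ⟨rfl, by rw [addLeaf_adj_none_some.mp h]⟩)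
  | some a, none => exact Or.inr (Or.inr ⟨by rw [addLeaf_adj_none_some.mp h.symm], rfl⟩)
  | some a, some b => exact Or.inl ⟨a, b, rfl, rfl, addLeaf_adj_some_some.mp h⟩

lemma addLeaf_nbrSet_some {a : V} (ha : a ≠ v) :
    (addLeaf G v).neighborSet (some a) = some '' G.neighborSet a := by
  ext w
  simp only [SimpleGraph.mem_neighborSet, Set.mem_image]
  constructor
  · intro h
    rcases addLeaf_adj_cases h with ⟨a', b, ha', hb, hadj⟩ | ⟨h1, -⟩ | ⟨h1, rfl⟩
    · rw [Option.some.injEq] at ha'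
      exact ⟨b, ha' ▸ hadj, hb.symm⟩
    · exact absurd h1 (by simp)
    · rw [Option.some.injEq] at h1
      exact absurd h1 ha
  · rintro ⟨b, hb, rfl⟩
    exact addLeaf_adj_some_some.mpr hb

lemma addLeaf_nbrSet_v :
    (addLeaf G v).neighborSet (some v) = insert none (some '' G.neighborSet v) := by
  ext w
  simp only [SimpleGraph.mem_neighborSet, Set.mem_insert_iff, Set.mem_image]
  constructor
  · intro h
    rcases addLeaf_adj_cases h with ⟨a', b, ha', hb, hadj⟩ | ⟨h1, -⟩ | ⟨-, rfl⟩
    · rw [Option.some.injEq] at ha'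
      exact Or.inr ⟨b, ha' ▸ hadj, hb.symm⟩
    · exact absurd h1 (by simp)
    · exact Or.inl rfl
  · rintro (rfl | ⟨b, hb, rfl⟩)
    · exact (addLeaf_adj_none_some.mpr rfl).symm
    · exact addLeaf_adj_some_some.mpr hb

lemma addLeaf_nbrSet_none :
    (addLeaf G v).neighborSet none = {some v} := by
  ext w
  simp only [SimpleGraph.mem_neighborSet, Set.mem_singleton_iff]
  constructor
  · intro h
    rcases addLeaf_adj_cases h with ⟨a', b, ha', hb, hadj⟩ | ⟨-, rfl⟩ | ⟨h1, -⟩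
    · exact absurd ha' (by simp)
    · rfl
    · exact absurd h1 (by simp)
  · rintro rfl
    exact addLeaf_adj_none_some.mpr rfl

lemma numLeaves_addLeaf [Finite V] (hv : 2 ≤ (G.neighborSet v).ncard) :
    numLeaves (addLeaf G v) = numLeaves G + 1 := by
  have hvnl : ¬ IsLeaf G v := by unfold IsLeaf; omega
  have hset : {x | IsLeaf (addLeaf G v) x} = insert none (some '' {a | IsLeaf G a}) := by
    ext w
    simp only [Set.mem_setOf_eq, Set.mem_insert_iff, Set.mem_image]
    constructor
    · intro h
      match w with
      | none => exact Or.inl rfl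
      | some a =>
          refine Or.inr ⟨a, ?_, rfl⟩
          by_cases ha : a = v
          · exfalso
            subst ha
            unfold IsLeaf at h
            rw [addLeaf_nbrSet_v, Set.ncard_insert_of_notMem (by simp)
              (Set.toFinite _), Set.ncard_image_of_injective _ (Option.some_injective V)] at h
            omega
          · unfold IsLeaf at h ⊢
            rwa [addLeaf_nbrSet_some ha,
              Set.ncard_image_of_injective _ (Option.some_injective V)] at h
    · rintro (rfl | ⟨a, ha, rfl⟩)
      · unfold IsLeaf
        rw [addLeaf_nbrSet_none]
        exact Set.ncard_singleton _
      · have hav : a ≠ v := fun h => hvnl (h ▸ ha)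
        unfold IsLeaf
        rw [addLeaf_nbrSet_some hav,
          Set.ncard_image_of_injective _ (Option.some_injective V)]
        exact ha
  unfold numLeaves
  rw [hset, Set.ncard_insert_of_notMem (by simp) (Set.toFinite _),
    Set.ncard_image_of_injective _ (Option.some_injective V)]

lemma op2_TF [Finite V] (hS : IsTotalForcingSet G S) (hv : IsStrongSupport G v) :
    IsTotalForcingSet (addLeaf G v) (insert none (some '' S)) := by
  have hvS : v ∈ S := hS.strongSupport_mem hv
  have htrans : ∀ x, Forces G S x → Forces (addLeaf G v) ↑(insert none (some '' S)) (some x) := by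
    intro x hx
    induction hx with
    | mem h => exact Forces.mem (Set.mem_insert_of_mem _ (Set.mem_image_of_mem _ h))
    | @force u x hadj hu hall ihu ihall =>
        refine Forces.force (u := some u) (addLeaf_adj_some_some.mpr hadj) ihu ?_
        intro w hw hne
        rcases addLeaf_adj_cases hw with ⟨a, b, ha, hb, hab⟩ | ⟨h1, -⟩ | ⟨-, rfl⟩
        · rw [Option.some.injEq] at ha
          subst hb
          exact ihall b (ha ▸ hab) (fun hc => hne (by rw [hc]))
        · exact absurd h1 (by simp)
        · exact Forces.mem (Set.mem_insert _ _)
  constructor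
  · intro x
    match x with
    | none => exact Forces.mem (Set.mem_insert _ _)
    | some a => exact htrans a (hS.1 a)
  · rintro x (rfl | ⟨s, hs, rfl⟩)
    · exact ⟨some v, Set.mem_insert_of_mem _ (Set.mem_image_of_mem _ hvS),
        addLeaf_adj_none_some.mpr rfl⟩
    · obtain ⟨t, htS, ht⟩ := hS.2 s hs
      exact ⟨some t, Set.mem_insert_of_mem _ (Set.mem_image_of_mem _ htS),
        addLeaf_adj_some_some.mpr ht⟩

end Op2
section Op3

variable {v w : V}

lemma IsStrongSupport.two_le [Finite V] (hv : IsStrongSupport G v) :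
    2 ≤ (G.neighborSet v).ncard := by
  obtain ⟨x, y, hxy, hvx, hvy, -, -⟩ := hv
  have hsub : {x, y} ⊆ G.neighborSet v := by
    rintro z (rfl | rfl)
    exacts [hvx, hvy]
  calc 2 = ({x, y} : Set V).ncard := (Set.ncard_pair hxy).symm
    _ ≤ _ := Set.ncard_le_ncard hsub (Set.toFinite _)

lemma swap_leaves_adj [DecidableEq V] (hv : IsLeaf G v) (hx : IsLeaf G x) (hvx : v ≠ x)
    (hwv : G.Adj w v) (hwx : G.Adj w x) (a b : V) :
    G.Adj (Equiv.swap v x a) (Equiv.swap v x b) ↔ G.Adj a b := by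
  have hvw : v ≠ w := fun h => G.irrefl (h ▸ hwv)
  have hxw : x ≠ w := fun h => G.irrefl (h ▸ hwx)
  have hvnbr : ∀ z, G.Adj v z → z = w := fun z hz => hv.eq_of_adj hz hwv.symm
  have hxnbr : ∀ z, G.Adj x z → z = w := fun z hz => hx.eq_of_adj hz hwx.symm
  have hdir : ∀ a b, G.Adj a b → G.Adj (Equiv.swap v x a) (Equiv.swap v x b) := by
    intro a b hab
    by_cases hav : a = v
    · subst hav
      have hbw : b = w := hvnbr b hab
      subst hbw
      rw [Equiv.swap_apply_left, Equiv.swap_apply_of_ne_of_ne hvw.symm hxw.symm]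
      exact hwx.symm
    · by_cases hax : a = x
      · subst hax
        have hbw : b = w := hxnbr b hab
        subst hbw
        rw [Equiv.swap_apply_right, Equiv.swap_apply_of_ne_of_ne hvw.symm hxw.symm]
        exact hwv.symm
      · by_cases hbv : b = v
        · subst hbv
          have haw : a = w := hvnbr a hab.symm
          subst haw
          rw [Equiv.swap_apply_left, Equiv.swap_apply_of_ne_of_ne hvw.symm hxw.symm]
          exact hwx
        · by_cases hbx : b = x
          · subst hbx
            have haw : a = w := hxnbr a hab.symm
            subst haw
            rw [Equiv.swap_apply_right, Equiv.swap_apply_of_ne_of_ne hvw.symm hxw.symm]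
            exact hwv
          · rwa [Equiv.swap_apply_of_ne_of_ne hav hax, Equiv.swap_apply_of_ne_of_ne hbv hbx]
  constructor
  · intro h
    have := hdir _ _ h
    rwa [Equiv.swap_apply_self, Equiv.swap_apply_self] at this
  · exact hdir a b

lemma exists_TF_containing_leaf [Finite V] (hS : IsTotalForcingSet G S)
    (hw : IsStrongSupport G w) (hvleaf : IsLeaf G v) (hwv : G.Adj w v) :
    ∃ S', IsTotalForcingSet G S' ∧ S'.ncard = S.ncard ∧ v ∈ S' ∧ w ∈ S' := by
  have hwS : w ∈ S := hS.strongSupport_mem hw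
  by_cases hvS : v ∈ S
  · exact ⟨S, hS, rfl, hvS, hwS⟩
  · obtain ⟨x, y, hxy, hwx, hwy, hx, hy⟩ := hw
    classical
    set x' := if x = v then y else x with hx'def
    have hx'leaf : IsLeaf G x' := by
      rw [hx'def]; split_ifs with h; exacts [hy, hx]
    have hwx' : G.Adj w x' := by
      rw [hx'def]; split_ifs with h; exacts [hwy, hwx]
    have hx'v : x' ≠ v := by
      rw [hx'def]; split_ifs with h
      · exact fun hc => hxy (h.trans hc.symm)
      · exact h
    have hx'S : x' ∈ S := by
      rcases hS.leaf_pair_mem (Ne.symm hx'v) hwv hwx' hvleaf hx'leaf with h | h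
      · exact absurd h hvS
      · exact h
    have hvw : v ≠ w := fun h => G.irrefl (h ▸ hwv)
    have hx'w : x' ≠ w := fun h => G.irrefl (h ▸ hwx')
    let e : G ≃g G := ⟨Equiv.swap v x', swap_leaves_adj hvleaf hx'leaf (Ne.symm hx'v) hwv hwx' _ _⟩
    refine ⟨e '' S, hS.map e, Set.ncard_image_of_injective _ e.injective, ?_, ?_⟩
    · exact ⟨x', hx'S, by simp [e, Equiv.swap_apply_right]⟩
    · exact ⟨w, hwS, by simp [e, Equiv.swap_apply_of_ne_of_ne hvw.symm (Ne.symm hx'w)]⟩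

lemma addTwo_adj_inl_inl {a b : V} :
    (addTwoLeaves G v).Adj (Sum.inl a) (Sum.inl b) ↔ G.Adj a b := by
  simp only [addTwoLeaves, SimpleGraph.fromRel_adj, ne_eq, Sum.inl.injEq]
  constructor
  · rintro ⟨hne, (⟨a', b', ha, hb, h⟩ | ⟨t, -, hb⟩) | (⟨a', b', ha, hb, h⟩ | ⟨t, -, hb⟩)⟩
    · subst ha; subst hb; exact h
    · exact absurd hb (by simp)
    · subst ha; subst hb; exact h.symm
    · exact absurd hb (by simp)
  · intro h
    exact ⟨h.ne, Or.inl (Or.inl ⟨a, b, rfl, rfl, h⟩)⟩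

lemma addTwo_adj_inl_inr {a : V} {t : Fin 2} :
    (addTwoLeaves G v).Adj (Sum.inl a) (Sum.inr t) ↔ a = v := by
  simp only [addTwoLeaves, SimpleGraph.fromRel_adj, ne_eq]
  constructor
  · rintro ⟨hne, (⟨a', b', ha, hb, h⟩ | ⟨t', ha, hb⟩) | (⟨a', b', ha, hb, h⟩ | ⟨t', ha, hb⟩)⟩
    · exact absurd hb (by simp)
    · simpa using ha
    · exact absurd ha (by simp)
    · exact absurd ha (by simp)
  · rintro rfl
    refine ⟨by simp, Or.inl (Or.inr ⟨t, ?_, ?_⟩)⟩ <;> simp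

lemma addTwo_adj_inr_inr {s t : Fin 2} : ¬ (addTwoLeaves G v).Adj (Sum.inr s) (Sum.inr t) := by
  simp [addTwoLeaves, SimpleGraph.fromRel_adj]

lemma addTwo_adj_cases {x y : V ⊕ Fin 2} (h : (addTwoLeaves G v).Adj x y) :
    (∃ a b, x = Sum.inl a ∧ y = Sum.inl b ∧ G.Adj a b) ∨
    (∃ t, x = Sum.inl v ∧ y = Sum.inr t) ∨ (∃ t, x = Sum.inr t ∧ y = Sum.inl v) := by
  match x, y with
  | Sum.inr s, Sum.inr t => exact absurd h addTwo_adj_inr_inr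
  | Sum.inl a, Sum.inr t =>
      exact Or.inr (Or.inl ⟨t, by rw [addTwo_adj_inl_inr.mp h], rfl⟩)
  | Sum.inr t, Sum.inl a =>
      exact Or.inr (Or.inr ⟨t, rfl, by rw [addTwo_adj_inl_inr.mp h.symm]⟩)
  | Sum.inl a, Sum.inl b => exact Or.inl ⟨a, b, rfl, rfl, addTwo_adj_inl_inl.mp h⟩

lemma addTwo_nbrSet_inl {a : V} (ha : a ≠ v) :
    (addTwoLeaves G v).neighborSet (Sum.inl a) = Sum.inl '' G.neighborSet a := by
  ext z
  simp only [SimpleGraph.mem_neighborSet, Set.mem_image]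
  constructor
  · intro h
    rcases addTwo_adj_cases h with ⟨a', b, ha', hb, hadj⟩ | ⟨t, h1, -⟩ | ⟨t, h1, -⟩
    · rw [Sum.inl.injEq] at ha'
      exact ⟨b, ha' ▸ hadj, hb.symm⟩
    · rw [Sum.inl.injEq] at h1
      exact absurd h1 ha
    · exact absurd h1 (by simp)
  · rintro ⟨b, hb, rfl⟩
    exact addTwo_adj_inl_inl.mpr hb

lemma addTwo_nbrSet_inlv :
    (addTwoLeaves G v).neighborSet (Sum.inl v) =
      insert (Sum.inr 0) (insert (Sum.inr 1) (Sum.inl '' G.neighborSet v)) := by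
  ext z
  simp only [SimpleGraph.mem_neighborSet, Set.mem_insert_iff, Set.mem_image]
  constructor
  · intro h
    rcases addTwo_adj_cases h with ⟨a', b, ha', hb, hadj⟩ | ⟨t, -, rfl⟩ | ⟨t, h1, -⟩
    · rw [Sum.inl.injEq] at ha'
      exact Or.inr (Or.inr ⟨b, ha' ▸ hadj, hb.symm⟩)
    · fin_cases t
      · exact Or.inl rfl
      · exact Or.inr (Or.inl rfl)
    · exact absurd h1 (by simp)
  · rintro (rfl | rfl | ⟨b, hb, rfl⟩)
    · exact addTwo_adj_inl_inr.mpr rfl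
    · exact addTwo_adj_inl_inr.mpr rfl
    · exact addTwo_adj_inl_inl.mpr hb

lemma addTwo_nbrSet_inr (t : Fin 2) :
    (addTwoLeaves G v).neighborSet (Sum.inr t) = {Sum.inl v} := by
  ext z
  simp only [SimpleGraph.mem_neighborSet, Set.mem_singleton_iff]
  constructor
  · intro h
    rcases addTwo_adj_cases h with ⟨a', b, ha', hb, hadj⟩ | ⟨t', h1, -⟩ | ⟨t', -, rfl⟩
    · exact absurd ha' (by simp)
    · exact absurd h1 (by simp)
    · rfl
  · rintro rfl
    exact (addTwo_adj_inl_inr.mpr rfl).symm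

lemma numLeaves_addTwoLeaves [Finite V] (hvleaf : IsLeaf G v) :
    numLeaves (addTwoLeaves G v) = numLeaves G + 1 := by
  have hinj : Function.Injective (Sum.inl : V → V ⊕ Fin 2) := Sum.inl_injective
  have hset : {x | IsLeaf (addTwoLeaves G v) x} =
      insert (Sum.inr 0) (insert (Sum.inr 1) (Sum.inl '' ({a | IsLeaf G a} \ {v}))) := by
    ext z
    simp only [Set.mem_setOf_eq, Set.mem_insert_iff, Set.mem_image, Set.mem_diff,
      Set.mem_singleton_iff]
    constructor
    · intro h
      match z with
      | Sum.inr t =>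
          fin_cases t
          · exact Or.inl rfl
          · exact Or.inr (Or.inl rfl)
      | Sum.inl a =>
          refine Or.inr (Or.inr ⟨a, ⟨?_, ?_⟩, rfl⟩)
          · by_cases hav : a = v
            · exfalso
              subst hav
              unfold IsLeaf at h
              rw [addTwo_nbrSet_inlv, Set.ncard_insert_of_notMem (by simp) (Set.toFinite _),
                Set.ncard_insert_of_notMem (by simp) (Set.toFinite _)] at h
              omega
            · unfold IsLeaf at h ⊢
              rwa [addTwo_nbrSet_inl hav, Set.ncard_image_of_injective _ hinj] at h
          · intro hav
            subst hav
            unfold IsLeaf at h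
            rw [addTwo_nbrSet_inlv, Set.ncard_insert_of_notMem (by simp) (Set.toFinite _),
              Set.ncard_insert_of_notMem (by simp) (Set.toFinite _)] at h
            omega
    · rintro (rfl | rfl | ⟨a, ⟨ha, hav⟩, rfl⟩)
      · unfold IsLeaf
        rw [addTwo_nbrSet_inr]
        exact Set.ncard_singleton _
      · unfold IsLeaf
        rw [addTwo_nbrSet_inr]
        exact Set.ncard_singleton _
      · unfold IsLeaf
        rwa [addTwo_nbrSet_inl hav, Set.ncard_image_of_injective _ hinj]
  have hvmem : v ∈ {a | IsLeaf G a} := hvleaf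
  have hpos : 0 < {a | IsLeaf G a}.ncard :=
    Set.ncard_pos (Set.toFinite _) |>.mpr ⟨v, hvmem⟩
  unfold numLeaves
  rw [hset, Set.ncard_insert_of_notMem (by simp) (Set.toFinite _),
    Set.ncard_insert_of_notMem (by simp) (Set.toFinite _),
    Set.ncard_image_of_injective _ hinj, Set.ncard_diff_singleton_of_mem hvmem]
  omega

lemma op3_TF [Finite V] (hS : IsTotalForcingSet G S) (hvS : v ∈ S) (hvleaf : IsLeaf G v)
    (hnbrS : ∀ b, G.Adj v b → b ∈ S) :
    IsTotalForcingSet (addTwoLeaves G v) (insert (Sum.inr 0) (Sum.inl '' S)) := by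
  set T := addTwoLeaves G v
  set S' : Set (V ⊕ Fin 2) := insert (Sum.inr 0) (Sum.inl '' S) with hS'
  have hvS' : (Sum.inl v : V ⊕ Fin 2) ∈ S' := Set.mem_insert_of_mem _ ⟨v, hvS, rfl⟩
  have hinr1 : Forces T S' (Sum.inr 1) := by
    refine Forces.force (u := Sum.inl v) (addTwo_adj_inl_inr.mpr rfl) (Forces.mem hvS') ?_
    intro z hz hne
    rcases addTwo_adj_cases hz with ⟨a', b, ha', hb, hadj⟩ | ⟨t, -, rfl⟩ | ⟨t, h1, -⟩
    · rw [Sum.inl.injEq] at ha'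
      subst hb
      exact Forces.mem (Set.mem_insert_of_mem _ ⟨b, hnbrS b (ha' ▸ hadj), rfl⟩)
    · fin_cases t
      · exact Forces.mem (Set.mem_insert _ _)
      · exact absurd rfl hne
    · exact absurd h1 (by simp)
  have htrans : ∀ x, Forces G S x → Forces T S' (Sum.inl x) := by
    intro x hx
    induction hx with
    | mem h => exact Forces.mem (Set.mem_insert_of_mem _ ⟨_, h, rfl⟩)
    | @force u x hadj hu hall ihu ihall =>
        refine Forces.force (u := Sum.inl u) (addTwo_adj_inl_inl.mpr hadj) ihu ?_
        intro z hz hne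
        rcases addTwo_adj_cases hz with ⟨a', b, ha', hb, hadj'⟩ | ⟨t, h1, rfl⟩ | ⟨t, h1, -⟩
        · rw [Sum.inl.injEq] at ha'
          subst hb
          exact ihall b (ha' ▸ hadj') (fun hc => hne (by rw [hc]))
        · fin_cases t
          · exact Forces.mem (Set.mem_insert _ _)
          · exact hinr1
        · exact absurd h1 (by simp)
  constructor
  · intro x
    match x with
    | Sum.inl a => exact htrans a (hS.1 a)
    | Sum.inr t =>
        fin_cases t
        · exact Forces.mem (Set.mem_insert _ _)
        · exact hinr1
  · rintro x (rfl | ⟨s, hs, rfl⟩)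
    · exact ⟨Sum.inl v, hvS', (addTwo_adj_inl_inr.mpr rfl).symm⟩
    · obtain ⟨t, htS, ht⟩ := hS.2 s hs
      exact ⟨Sum.inl t, Set.mem_insert_of_mem _ ⟨t, htS, rfl⟩, addTwo_adj_inl_inl.mpr ht⟩

end Op3
section Op4

variable {v : V}

lemma addP3_adj_inl_inl {a b : V} :
    (addP3 G v).Adj (Sum.inl a) (Sum.inl b) ↔ G.Adj a b := by
  simp only [addP3, SimpleGraph.fromRel_adj, ne_eq, Sum.inl.injEq]
  constructor
  · rintro ⟨hne, (⟨a', b', ha, hb, h⟩ | ⟨ha, -⟩) | (⟨a', b', ha, hb, h⟩ | ⟨ha, -⟩)⟩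
    · subst ha; subst hb; exact h
    · exact absurd ha (by simp)
    · subst ha; subst hb; exact h.symm
    · exact absurd ha (by simp)
  · intro h
    exact ⟨h.ne, Or.inl (Or.inl ⟨a, b, rfl, rfl, h⟩)⟩

lemma addP3_adj_inl_inr {a : V} {t : Fin 3} :
    (addP3 G v).Adj (Sum.inl a) (Sum.inr t) ↔ a = v ∧ t = 1 := by
  simp only [addP3, SimpleGraph.fromRel_adj, ne_eq]
  constructor
  · rintro ⟨hne, (⟨a', b', ha, hb, h⟩ | ⟨ha, -⟩) | (⟨a', b', ha, hb, h⟩ | ⟨ha, hb⟩)⟩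
    · exact absurd hb (by simp)
    · exact absurd ha (by simp)
    · exact absurd ha (by simp)
    · rcases hb with hb | hb | hb
      · exact absurd hb (by simp)
      · exact absurd hb (by simp)
      · rw [Sum.inr.injEq] at ha
        rw [Sum.inl.injEq] at hb
        exact ⟨hb, ha⟩
  · rintro ⟨rfl, rfl⟩
    exact ⟨by simp, Or.inr (Or.inr ⟨rfl, Or.inr (Or.inr rfl)⟩)⟩

lemma addP3_adj_inr_inr {s t : Fin 3} :
    (addP3 G v).Adj (Sum.inr s) (Sum.inr t) ↔
      (s = 1 ∧ (t = 0 ∨ t = 2)) ∨ (t = 1 ∧ (s = 0 ∨ s = 2)) := by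
  simp only [addP3, SimpleGraph.fromRel_adj, ne_eq]
  constructor
  · rintro ⟨hne, (⟨a', b', ha, hb, h⟩ | ⟨ha, hb⟩) | (⟨a', b', ha, hb, h⟩ | ⟨ha, hb⟩)⟩
    · exact absurd ha (by simp)
    · rw [Sum.inr.injEq] at ha
      rcases hb with hb | hb | hb
      · exact Or.inl ⟨ha, Or.inl (by simpa using hb)⟩
      · exact Or.inl ⟨ha, Or.inr (by simpa using hb)⟩
      · exact absurd hb (by simp)
    · exact absurd ha (by simp)
    · rw [Sum.inr.injEq] at ha
      rcases hb with hb | hb | hb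
      · exact Or.inr ⟨ha, Or.inl (by simpa using hb)⟩
      · exact Or.inr ⟨ha, Or.inr (by simpa using hb)⟩
      · exact absurd hb (by simp)
  · rintro (⟨rfl, (rfl | rfl)⟩ | ⟨rfl, (rfl | rfl)⟩)
    · exact ⟨by simp, Or.inl (Or.inr ⟨rfl, Or.inl rfl⟩)⟩
    · exact ⟨by simp, Or.inl (Or.inr ⟨rfl, Or.inr (Or.inl rfl)⟩)⟩
    · exact ⟨by simp, Or.inr (Or.inr ⟨rfl, Or.inl rfl⟩)⟩
    · exact ⟨by simp, Or.inr (Or.inr ⟨rfl, Or.inr (Or.inl rfl)⟩)⟩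

lemma addP3_adj_cases {x y : V ⊕ Fin 3} (h : (addP3 G v).Adj x y) :
    (∃ a b, x = Sum.inl a ∧ y = Sum.inl b ∧ G.Adj a b) ∨
    (∃ s t, x = Sum.inr s ∧ y = Sum.inr t) ∨
    (x = Sum.inl v ∧ y = Sum.inr 1) ∨ (x = Sum.inr 1 ∧ y = Sum.inl v) := by
  match x, y with
  | Sum.inl a, Sum.inl b => exact Or.inl ⟨a, b, rfl, rfl, addP3_adj_inl_inl.mp h⟩
  | Sum.inr s, Sum.inr t => exact Or.inr (Or.inl ⟨s, t, rfl, rfl⟩)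
  | Sum.inl a, Sum.inr t =>
      obtain ⟨rfl, rfl⟩ := addP3_adj_inl_inr.mp h
      exact Or.inr (Or.inr (Or.inl ⟨rfl, rfl⟩))
  | Sum.inr t, Sum.inl a =>
      obtain ⟨rfl, rfl⟩ := addP3_adj_inl_inr.mp h.symm
      exact Or.inr (Or.inr (Or.inr ⟨rfl, rfl⟩))

lemma addP3_nbrSet_inl {a : V} (ha : a ≠ v) :
    (addP3 G v).neighborSet (Sum.inl a) = Sum.inl '' G.neighborSet a := by
  ext z
  simp only [SimpleGraph.mem_neighborSet, Set.mem_image]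
  constructor
  · intro h
    match z with
    | Sum.inl b => exact ⟨b, addP3_adj_inl_inl.mp h, rfl⟩
    | Sum.inr t => exact absurd (addP3_adj_inl_inr.mp h).1 ha
  · rintro ⟨b, hb, rfl⟩
    exact addP3_adj_inl_inl.mpr hb

lemma addP3_nbrSet_inlv :
    (addP3 G v).neighborSet (Sum.inl v) = insert (Sum.inr 1) (Sum.inl '' G.neighborSet v) := by
  ext z
  simp only [SimpleGraph.mem_neighborSet, Set.mem_insert_iff, Set.mem_image]
  constructor
  · intro h
    match z with
    | Sum.inl b => exact Or.inr ⟨b, addP3_adj_inl_inl.mp h, rfl⟩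
    | Sum.inr t => exact Or.inl (by rw [(addP3_adj_inl_inr.mp h).2])
  · rintro (rfl | ⟨b, hb, rfl⟩)
    · exact addP3_adj_inl_inr.mpr ⟨rfl, rfl⟩
    · exact addP3_adj_inl_inl.mpr hb

lemma addP3_nbrSet_inr0 :
    (addP3 G v).neighborSet (Sum.inr 0) = {Sum.inr 1} := by
  ext z
  simp only [SimpleGraph.mem_neighborSet, Set.mem_singleton_iff]
  constructor
  · intro h
    match z with
    | Sum.inl b =>
        have := (addP3_adj_inl_inr.mp h.symm).2
        exact absurd this (by decide)
    | Sum.inr t =>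
        rcases addP3_adj_inr_inr.mp h with ⟨h1, -⟩ | ⟨h1, -⟩
        · exact absurd h1 (by decide)
        · rw [h1]
  · rintro rfl
    exact addP3_adj_inr_inr.mpr (Or.inr ⟨rfl, Or.inl rfl⟩)

lemma addP3_nbrSet_inr2 :
    (addP3 G v).neighborSet (Sum.inr 2) = {Sum.inr 1} := by
  ext z
  simp only [SimpleGraph.mem_neighborSet, Set.mem_singleton_iff]
  constructor
  · intro h
    match z with
    | Sum.inl b =>
        have := (addP3_adj_inl_inr.mp h.symm).2
        exact absurd this (by decide)
    | Sum.inr t =>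
        rcases addP3_adj_inr_inr.mp h with ⟨h1, -⟩ | ⟨h1, -⟩
        · exact absurd h1 (by decide)
        · rw [h1]
  · rintro rfl
    exact addP3_adj_inr_inr.mpr (Or.inr ⟨rfl, Or.inr rfl⟩)

lemma addP3_nbrSet_inr1 :
    (addP3 G v).neighborSet (Sum.inr 1) = {Sum.inr 0, Sum.inr 2, Sum.inl v} := by
  ext z
  simp only [SimpleGraph.mem_neighborSet, Set.mem_insert_iff, Set.mem_singleton_iff]
  constructor
  · intro h
    match z with
    | Sum.inl b =>
        have := (addP3_adj_inl_inr.mp h.symm).1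
        exact Or.inr (Or.inr (by rw [this]))
    | Sum.inr t =>
        rcases addP3_adj_inr_inr.mp h with ⟨-, (h1 | h1)⟩ | ⟨-, h2⟩
        · exact Or.inl (by rw [h1])
        · exact Or.inr (Or.inl (by rw [h1]))
        · exact absurd h2 (by decide)
  · rintro (rfl | rfl | rfl)
    · exact addP3_adj_inr_inr.mpr (Or.inl ⟨rfl, Or.inl rfl⟩)
    · exact addP3_adj_inr_inr.mpr (Or.inl ⟨rfl, Or.inr rfl⟩)
    · exact (addP3_adj_inl_inr.mpr ⟨rfl, rfl⟩).symm

lemma numLeaves_addP3 [Finite V] (hv : 2 ≤ (G.neighborSet v).ncard) :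
    numLeaves (addP3 G v) = numLeaves G + 2 := by
  have hinj : Function.Injective (Sum.inl : V → V ⊕ Fin 3) := Sum.inl_injective
  have hvnl : ¬ IsLeaf G v := by unfold IsLeaf; omega
  have hset : {x | IsLeaf (addP3 G v) x} =
      insert (Sum.inr 0) (insert (Sum.inr 2) (Sum.inl '' {a | IsLeaf G a})) := by
    ext z
    simp only [Set.mem_setOf_eq, Set.mem_insert_iff, Set.mem_image]
    constructor
    · intro h
      match z with
      | Sum.inr t =>
          fin_cases t
          · exact Or.inl rfl
          · exfalso
            unfold IsLeaf at h
            have h' : ((addP3 G v).neighborSet (Sum.inr 1)).ncard = 1 := h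
            rw [addP3_nbrSet_inr1, Set.ncard_insert_of_notMem (by simp) (Set.toFinite _),
              Set.ncard_insert_of_notMem (by simp) (Set.toFinite _),
              Set.ncard_singleton] at h'
            omega
          · exact Or.inr (Or.inl rfl)
      | Sum.inl a =>
          refine Or.inr (Or.inr ⟨a, ?_, rfl⟩)
          by_cases hav : a = v
          · exfalso
            subst hav
            unfold IsLeaf at h
            rw [addP3_nbrSet_inlv, Set.ncard_insert_of_notMem (by simp) (Set.toFinite _),
              Set.ncard_image_of_injective _ hinj] at h
            omega
          · unfold IsLeaf at h ⊢
            rwa [addP3_nbrSet_inl hav, Set.ncard_image_of_injective _ hinj] at h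
    · rintro (rfl | rfl | ⟨a, ha, rfl⟩)
      · unfold IsLeaf
        rw [addP3_nbrSet_inr0]
        exact Set.ncard_singleton _
      · unfold IsLeaf
        rw [addP3_nbrSet_inr2]
        exact Set.ncard_singleton _
      · have hav : a ≠ v := fun h => hvnl (h ▸ ha)
        unfold IsLeaf
        rwa [addP3_nbrSet_inl hav, Set.ncard_image_of_injective _ hinj]
  unfold numLeaves
  rw [hset, Set.ncard_insert_of_notMem (by simp) (Set.toFinite _),
    Set.ncard_insert_of_notMem (by simp) (Set.toFinite _),
    Set.ncard_image_of_injective _ hinj]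

lemma op4_TF [Finite V] (hS : IsTotalForcingSet G S) :
    IsTotalForcingSet (addP3 G v)
      (insert (Sum.inr 0) (insert (Sum.inr 1) (Sum.inl '' S))) := by
  set T := addP3 G v with hT
  set S' : Set (V ⊕ Fin 3) := insert (Sum.inr 0) (insert (Sum.inr 1) (Sum.inl '' S)) with hS'
  have htrans : ∀ x, Forces G S x → Forces T S' (Sum.inl x) := by
    intro x hx
    induction hx with
    | mem h => exact Forces.mem (Set.mem_insert_of_mem _ (Set.mem_insert_of_mem _ ⟨_, h, rfl⟩))
    | @force u x hadj hu hall ihu ihall =>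
        refine Forces.force (u := Sum.inl u) (addP3_adj_inl_inl.mpr hadj) ihu ?_
        intro z hz hne
        match z with
        | Sum.inl b =>
            exact ihall b (addP3_adj_inl_inl.mp hz) (fun hc => hne (by rw [hc]))
        | Sum.inr t =>
            obtain ⟨-, rfl⟩ := addP3_adj_inl_inr.mp hz
            exact Forces.mem (Set.mem_insert_of_mem _ (Set.mem_insert _ _))
  have hinr2 : Forces T S' (Sum.inr 2) := by
    refine Forces.force (u := Sum.inr 1)
      (addP3_adj_inr_inr.mpr (Or.inl ⟨rfl, Or.inr rfl⟩))
      (Forces.mem (Set.mem_insert_of_mem _ (Set.mem_insert _ _))) ?_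
    intro z hz hne
    have hz' : z ∈ (addP3 G v).neighborSet (Sum.inr 1) := hz
    rw [addP3_nbrSet_inr1] at hz'
    rcases hz' with rfl | rfl | rfl
    · exact Forces.mem (Set.mem_insert _ _)
    · exact absurd rfl hne
    · exact htrans v (hS.1 v)
  constructor
  · intro x
    match x with
    | Sum.inl a => exact htrans a (hS.1 a)
    | Sum.inr t =>
        fin_cases t
        · exact Forces.mem (Set.mem_insert _ _)
        · exact Forces.mem (Set.mem_insert_of_mem _ (Set.mem_insert _ _))
        · exact hinr2
  · rintro x (rfl | rfl | ⟨s, hs, rfl⟩)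
    · exact ⟨Sum.inr 1, Set.mem_insert_of_mem _ (Set.mem_insert _ _),
        addP3_adj_inr_inr.mpr (Or.inr ⟨rfl, Or.inl rfl⟩)⟩
    · exact ⟨Sum.inr 0, Set.mem_insert _ _,
        addP3_adj_inr_inr.mpr (Or.inl ⟨rfl, Or.inl rfl⟩)⟩
    · obtain ⟨t, htS, ht⟩ := hS.2 s hs
      exact ⟨Sum.inl t, Set.mem_insert_of_mem _ (Set.mem_insert_of_mem _ ⟨t, htS, rfl⟩),
        addP3_adj_inl_inl.mpr ht⟩

end Op4
section Op5

variable {v : V}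

lemma st_adj_inl_inl {a b : V} :
    (addSubdividedStar G v).Adj (Sum.inl a) (Sum.inl b) ↔ G.Adj a b := by
  simp only [addSubdividedStar, SimpleGraph.fromRel_adj, ne_eq, Sum.inl.injEq]
  constructor
  · rintro ⟨hne, (⟨a', b', ha, hb, h⟩ | ⟨ha, -⟩ | ⟨ha, -⟩) | (⟨a', b', ha, hb, h⟩ | ⟨ha, -⟩ | ⟨ha, -⟩)⟩
    · subst ha; subst hb; exact h
    · exact absurd ha (by simp)
    · exact absurd ha (by simp)
    · subst ha; subst hb; exact h.symm
    · exact absurd ha (by simp)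
    · exact absurd ha (by simp)
  · intro h
    exact ⟨h.ne, Or.inl (Or.inl ⟨a, b, rfl, rfl, h⟩)⟩

lemma st_adj_inl_inr {a : V} {t : Fin 6} :
    (addSubdividedStar G v).Adj (Sum.inl a) (Sum.inr t) ↔ a = v ∧ t = 1 := by
  simp only [addSubdividedStar, SimpleGraph.fromRel_adj, ne_eq]
  constructor
  · rintro ⟨hne, (⟨a', b', ha, hb, h⟩ | ⟨ha, -⟩ | ⟨ha, -⟩) |
      (⟨a', b', ha, hb, h⟩ | ⟨ha, hb⟩ | ⟨ha, hb⟩)⟩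
    · exact absurd hb (by simp)
    · exact absurd ha (by simp)
    · exact absurd ha (by simp)
    · exact absurd ha (by simp)
    · rcases hb with hb | hb | hb
      · exact absurd hb (by simp)
      · exact absurd hb (by simp)
      · rw [Sum.inr.injEq] at ha
        rw [Sum.inl.injEq] at hb
        exact ⟨hb, ha⟩
    · rcases hb with hb | hb | hb <;> exact absurd hb (by simp)
  · rintro ⟨rfl, rfl⟩
    exact ⟨by simp, Or.inr (Or.inr (Or.inl ⟨rfl, Or.inr (Or.inr rfl)⟩))⟩

lemma st_adj_inr_inr {s t : Fin 6} :
    (addSubdividedStar G v).Adj (Sum.inr s) (Sum.inr t) ↔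
      (s = 1 ∧ (t = 0 ∨ t = 2)) ∨ (s = 3 ∧ (t = 2 ∨ t = 4 ∨ t = 5)) ∨
      (t = 1 ∧ (s = 0 ∨ s = 2)) ∨ (t = 3 ∧ (s = 2 ∨ s = 4 ∨ s = 5)) := by
  simp only [addSubdividedStar, SimpleGraph.fromRel_adj, ne_eq]
  constructor
  · rintro ⟨hne, (⟨a', b', ha, hb, h⟩ | ⟨ha, hb⟩ | ⟨ha, hb⟩) |
      (⟨a', b', ha, hb, h⟩ | ⟨ha, hb⟩ | ⟨ha, hb⟩)⟩
    · exact absurd ha (by simp)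
    · rw [Sum.inr.injEq] at ha
      rcases hb with hb | hb | hb
      · exact Or.inl ⟨ha, Or.inl (by simpa using hb)⟩
      · exact Or.inl ⟨ha, Or.inr (by simpa using hb)⟩
      · exact absurd hb (by simp)
    · rw [Sum.inr.injEq] at ha
      rcases hb with hb | hb | hb
      · exact Or.inr (Or.inl ⟨ha, Or.inl (by simpa using hb)⟩)
      · exact Or.inr (Or.inl ⟨ha, Or.inr (Or.inl (by simpa using hb))⟩)
      · exact Or.inr (Or.inl ⟨ha, Or.inr (Or.inr (by simpa using hb))⟩)
    · exact absurd ha (by simp)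
    · rw [Sum.inr.injEq] at ha
      rcases hb with hb | hb | hb
      · exact Or.inr (Or.inr (Or.inl ⟨ha, Or.inl (by simpa using hb)⟩))
      · exact Or.inr (Or.inr (Or.inl ⟨ha, Or.inr (by simpa using hb)⟩))
      · exact absurd hb (by simp)
    · rw [Sum.inr.injEq] at ha
      rcases hb with hb | hb | hb
      · exact Or.inr (Or.inr (Or.inr ⟨ha, Or.inl (by simpa using hb)⟩))
      · exact Or.inr (Or.inr (Or.inr ⟨ha, Or.inr (Or.inl (by simpa using hb))⟩))
      · exact Or.inr (Or.inr (Or.inr ⟨ha, Or.inr (Or.inr (by simpa using hb))⟩))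
  · rintro (⟨rfl, (rfl | rfl)⟩ | ⟨rfl, (rfl | rfl | rfl)⟩ |
      ⟨rfl, (rfl | rfl)⟩ | ⟨rfl, (rfl | rfl | rfl)⟩)
    · exact ⟨by simp, Or.inl (Or.inr (Or.inl ⟨rfl, Or.inl rfl⟩))⟩
    · exact ⟨by simp, Or.inl (Or.inr (Or.inl ⟨rfl, Or.inr (Or.inl rfl)⟩))⟩
    · exact ⟨by simp, Or.inl (Or.inr (Or.inr ⟨rfl, Or.inl rfl⟩))⟩
    · exact ⟨by simp, Or.inl (Or.inr (Or.inr ⟨rfl, Or.inr (Or.inl rfl)⟩))⟩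
    · exact ⟨by simp, Or.inl (Or.inr (Or.inr ⟨rfl, Or.inr (Or.inr rfl)⟩))⟩
    · exact ⟨by simp, Or.inr (Or.inr (Or.inl ⟨rfl, Or.inl rfl⟩))⟩
    · exact ⟨by simp, Or.inr (Or.inr (Or.inl ⟨rfl, Or.inr (Or.inl rfl)⟩))⟩
    · exact ⟨by simp, Or.inr (Or.inr (Or.inr ⟨rfl, Or.inl rfl⟩))⟩
    · exact ⟨by simp, Or.inr (Or.inr (Or.inr ⟨rfl, Or.inr (Or.inl rfl)⟩))⟩
    · exact ⟨by simp, Or.inr (Or.inr (Or.inr ⟨rfl, Or.inr (Or.inr rfl)⟩))⟩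

lemma st_nbrSet_inl {a : V} (ha : a ≠ v) :
    (addSubdividedStar G v).neighborSet (Sum.inl a) = Sum.inl '' G.neighborSet a := by
  ext z
  simp only [SimpleGraph.mem_neighborSet, Set.mem_image]
  constructor
  · intro h
    match z with
    | Sum.inl b => exact ⟨b, st_adj_inl_inl.mp h, rfl⟩
    | Sum.inr t => exact absurd (st_adj_inl_inr.mp h).1 ha
  · rintro ⟨b, hb, rfl⟩
    exact st_adj_inl_inl.mpr hb

lemma st_nbrSet_inlv :
    (addSubdividedStar G v).neighborSet (Sum.inl v) =
      insert (Sum.inr 1) (Sum.inl '' G.neighborSet v) := by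
  ext z
  simp only [SimpleGraph.mem_neighborSet, Set.mem_insert_iff, Set.mem_image]
  constructor
  · intro h
    match z with
    | Sum.inl b => exact Or.inr ⟨b, st_adj_inl_inl.mp h, rfl⟩
    | Sum.inr t => exact Or.inl (by rw [(st_adj_inl_inr.mp h).2])
  · rintro (rfl | ⟨b, hb, rfl⟩)
    · exact st_adj_inl_inr.mpr ⟨rfl, rfl⟩
    · exact st_adj_inl_inl.mpr hb

lemma st_nbrSet_inr (t : Fin 6) :
    (addSubdividedStar G v).neighborSet (Sum.inr t) =
      if t = 0 then {Sum.inr 1}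
      else if t = 1 then {Sum.inr 0, Sum.inr 2, Sum.inl v}
      else if t = 2 then {Sum.inr 1, Sum.inr 3}
      else if t = 3 then {Sum.inr 2, Sum.inr 4, Sum.inr 5}
      else {Sum.inr 3} := by
  ext z
  simp only [SimpleGraph.mem_neighborSet]
  match z with
  | Sum.inl b =>
      have h1 : (addSubdividedStar G v).Adj (Sum.inr t) (Sum.inl b) ↔ (b = v ∧ t = 1) := by
        rw [SimpleGraph.adj_comm]; exact st_adj_inl_inr
      rw [h1]
      fin_cases t <;> simp
  | Sum.inr s =>
      rw [SimpleGraph.adj_comm, st_adj_inr_inr]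
      fin_cases t <;> fin_cases s <;> simp
end Op5
section Op5b

variable {v : V}

lemma st_nbrSet_inr0 : (addSubdividedStar G v).neighborSet (Sum.inr 0) = {Sum.inr 1} := by
  rw [st_nbrSet_inr]; simp
lemma st_nbrSet_inr1 : (addSubdividedStar G v).neighborSet (Sum.inr 1) =
    {Sum.inr 0, Sum.inr 2, Sum.inl v} := by
  rw [st_nbrSet_inr]; simp
lemma st_nbrSet_inr2 : (addSubdividedStar G v).neighborSet (Sum.inr 2) =
    {Sum.inr 1, Sum.inr 3} := by
  rw [st_nbrSet_inr]; simp
lemma st_nbrSet_inr3 : (addSubdividedStar G v).neighborSet (Sum.inr 3) =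
    {Sum.inr 2, Sum.inr 4, Sum.inr 5} := by
  rw [st_nbrSet_inr]; simp
lemma st_nbrSet_inr4 : (addSubdividedStar G v).neighborSet (Sum.inr 4) = {Sum.inr 3} := by
  rw [st_nbrSet_inr]; simp
lemma st_nbrSet_inr5 : (addSubdividedStar G v).neighborSet (Sum.inr 5) = {Sum.inr 3} := by
  rw [st_nbrSet_inr]; simp

lemma numLeaves_addSubdividedStar [Finite V] (hv : 2 ≤ (G.neighborSet v).ncard) :
    numLeaves (addSubdividedStar G v) = numLeaves G + 3 := by
  have hinj : Function.Injective (Sum.inl : V → V ⊕ Fin 6) := Sum.inl_injective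
  have hvnl : ¬ IsLeaf G v := by unfold IsLeaf; omega
  have hset : {x | IsLeaf (addSubdividedStar G v) x} =
      insert (Sum.inr 0) (insert (Sum.inr 4) (insert (Sum.inr 5)
        (Sum.inl '' {a | IsLeaf G a}))) := by
    ext z
    simp only [Set.mem_setOf_eq, Set.mem_insert_iff, Set.mem_image]
    constructor
    · intro h
      match z with
      | Sum.inr t =>
          fin_cases t
          · exact Or.inl rfl
          · exfalso
            have h' : ((addSubdividedStar G v).neighborSet (Sum.inr 1)).ncard = 1 := h
            rw [st_nbrSet_inr1, Set.ncard_insert_of_notMem (by simp) (Set.toFinite _),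
              Set.ncard_insert_of_notMem (by simp) (Set.toFinite _),
              Set.ncard_singleton] at h'
            omega
          · exfalso
            have h' : ((addSubdividedStar G v).neighborSet (Sum.inr 2)).ncard = 1 := h
            rw [st_nbrSet_inr2, Set.ncard_pair (by simp)] at h'
            omega
          · exfalso
            have h' : ((addSubdividedStar G v).neighborSet (Sum.inr 3)).ncard = 1 := h
            rw [st_nbrSet_inr3, Set.ncard_insert_of_notMem (by simp) (Set.toFinite _),
              Set.ncard_insert_of_notMem (by simp) (Set.toFinite _),
              Set.ncard_singleton] at h'
            omega
          · exact Or.inr (Or.inl rfl)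
          · exact Or.inr (Or.inr (Or.inl rfl))
      | Sum.inl a =>
          refine Or.inr (Or.inr (Or.inr ⟨a, ?_, rfl⟩))
          by_cases hav : a = v
          · exfalso
            subst hav
            unfold IsLeaf at h
            rw [st_nbrSet_inlv, Set.ncard_insert_of_notMem (by simp) (Set.toFinite _),
              Set.ncard_image_of_injective _ hinj] at h
            omega
          · unfold IsLeaf at h ⊢
            rwa [st_nbrSet_inl hav, Set.ncard_image_of_injective _ hinj] at h
    · rintro (rfl | rfl | rfl | ⟨a, ha, rfl⟩)
      · unfold IsLeaf; rw [st_nbrSet_inr0]; exact Set.ncard_singleton _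
      · unfold IsLeaf; rw [st_nbrSet_inr4]; exact Set.ncard_singleton _
      · unfold IsLeaf; rw [st_nbrSet_inr5]; exact Set.ncard_singleton _
      · have hav : a ≠ v := fun h => hvnl (h ▸ ha)
        unfold IsLeaf
        rwa [st_nbrSet_inl hav, Set.ncard_image_of_injective _ hinj]
  unfold numLeaves
  rw [hset, Set.ncard_insert_of_notMem (by simp) (Set.toFinite _),
    Set.ncard_insert_of_notMem (by simp) (Set.toFinite _),
    Set.ncard_insert_of_notMem (by simp) (Set.toFinite _),
    Set.ncard_image_of_injective _ hinj]

lemma op5_TF [Finite V] (hS : IsTotalForcingSet G S) :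
    IsTotalForcingSet (addSubdividedStar G v)
      (insert (Sum.inr 2) (insert (Sum.inr 3) (insert (Sum.inr 4) (Sum.inl '' S)))) := by
  set T := addSubdividedStar G v with hT
  set S' : Set (V ⊕ Fin 6) :=
    insert (Sum.inr 2) (insert (Sum.inr 3) (insert (Sum.inr 4) (Sum.inl '' S))) with hS'
  have m2 : (Sum.inr 2 : V ⊕ Fin 6) ∈ S' := Set.mem_insert _ _
  have m3 : (Sum.inr 3 : V ⊕ Fin 6) ∈ S' := Set.mem_insert_of_mem _ (Set.mem_insert _ _)
  have m4 : (Sum.inr 4 : V ⊕ Fin 6) ∈ S' :=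
    Set.mem_insert_of_mem _ (Set.mem_insert_of_mem _ (Set.mem_insert _ _))
  have mS : ∀ s ∈ S, (Sum.inl s : V ⊕ Fin 6) ∈ S' := fun s hs =>
    Set.mem_insert_of_mem _ (Set.mem_insert_of_mem _ (Set.mem_insert_of_mem _ ⟨s, hs, rfl⟩))
  have h5 : Forces T S' (Sum.inr 5) := by
    refine Forces.force (u := Sum.inr 3) ?_ (Forces.mem m3) ?_
    · have : Sum.inr 5 ∈ T.neighborSet (Sum.inr 3) := by rw [hT, st_nbrSet_inr3]; simp
      exact this
    · intro z hz hne
      have hz' : z ∈ T.neighborSet (Sum.inr 3) := hz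
      rw [hT, st_nbrSet_inr3] at hz'
      rcases hz' with rfl | rfl | rfl
      · exact Forces.mem m2
      · exact Forces.mem m4
      · exact absurd rfl hne
  have h1 : Forces T S' (Sum.inr 1) := by
    refine Forces.force (u := Sum.inr 2) ?_ (Forces.mem m2) ?_
    · have : Sum.inr 1 ∈ T.neighborSet (Sum.inr 2) := by rw [hT, st_nbrSet_inr2]; simp
      exact this
    · intro z hz hne
      have hz' : z ∈ T.neighborSet (Sum.inr 2) := hz
      rw [hT, st_nbrSet_inr2] at hz'
      rcases hz' with rfl | rfl
      · exact absurd rfl hne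
      · exact Forces.mem m3
  have htrans : ∀ x, Forces G S x → Forces T S' (Sum.inl x) := by
    intro x hx
    induction hx with
    | mem h => exact Forces.mem (mS _ h)
    | @force u x hadj hu hall ihu ihall =>
        refine Forces.force (u := Sum.inl u) (st_adj_inl_inl.mpr hadj) ihu ?_
        intro z hz hne
        match z with
        | Sum.inl b =>
            exact ihall b (st_adj_inl_inl.mp hz) (fun hc => hne (by rw [hc]))
        | Sum.inr t =>
            obtain ⟨-, rfl⟩ := st_adj_inl_inr.mp hz
            exact h1
  have h0 : Forces T S' (Sum.inr 0) := by
    refine Forces.force (u := Sum.inr 1) ?_ h1 ?_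
    · have : Sum.inr 0 ∈ T.neighborSet (Sum.inr 1) := by rw [hT, st_nbrSet_inr1]; simp
      exact this
    · intro z hz hne
      have hz' : z ∈ T.neighborSet (Sum.inr 1) := hz
      rw [hT, st_nbrSet_inr1] at hz'
      rcases hz' with rfl | rfl | rfl
      · exact absurd rfl hne
      · exact Forces.mem m2
      · exact htrans v (hS.1 v)
  constructor
  · intro x
    match x with
    | Sum.inl a => exact htrans a (hS.1 a)
    | Sum.inr t =>
        fin_cases t
        · exact h0
        · exact h1
        · exact Forces.mem m2
        · exact Forces.mem m3
        · exact Forces.mem m4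
        · exact h5
  · rintro x (rfl | rfl | rfl | ⟨s, hs, rfl⟩)
    · refine ⟨Sum.inr 3, m3, ?_⟩
      have : Sum.inr 3 ∈ T.neighborSet (Sum.inr 2) := by rw [hT, st_nbrSet_inr2]; simp
      exact this
    · refine ⟨Sum.inr 2, m2, ?_⟩
      have : Sum.inr 2 ∈ T.neighborSet (Sum.inr 3) := by rw [hT, st_nbrSet_inr3]; simp
      exact this
    · refine ⟨Sum.inr 3, m3, ?_⟩
      have : Sum.inr 3 ∈ T.neighborSet (Sum.inr 4) := by rw [hT, st_nbrSet_inr4]; simp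
      exact this
    · obtain ⟨t, htS, ht⟩ := hS.2 s hs
      exact ⟨Sum.inl t, mS t htS, st_adj_inl_inl.mpr ht⟩

end Op5b
section Op1

variable {u v : V}

lemma sd_adj_some_some {a b : V} :
    (subdivide1 G u v).Adj (some a) (some b) ↔
      G.Adj a b ∧ ¬(a = u ∧ b = v) ∧ ¬(a = v ∧ b = u) := by
  simp only [subdivide1, SimpleGraph.fromRel_adj, ne_eq, Option.some.injEq]
  constructor
  · rintro ⟨hne, (⟨a', b', ha, hb, h, g1, g2⟩ | ⟨ha, -⟩) | (⟨a', b', ha, hb, h, g1, g2⟩ | ⟨ha, -⟩)⟩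
    · subst ha; subst hb; exact ⟨h, g1, g2⟩
    · exact absurd ha (by simp)
    · subst ha; subst hb
      exact ⟨h.symm, fun ⟨h1, h2⟩ => g2 ⟨h2, h1⟩, fun ⟨h1, h2⟩ => g1 ⟨h2, h1⟩⟩
    · exact absurd ha (by simp)
  · rintro ⟨h, g1, g2⟩
    exact ⟨h.ne, Or.inl (Or.inl ⟨a, b, rfl, rfl, h, g1, g2⟩)⟩

lemma sd_adj_none_some {b : V} :
    (subdivide1 G u v).Adj none (some b) ↔ b = u ∨ b = v := by
  simp only [subdivide1, SimpleGraph.fromRel_adj, ne_eq]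
  constructor
  · rintro ⟨hne, (⟨a', b', ha, hb, h, g1, g2⟩ | ⟨-, hb⟩) | (⟨a', b', ha, hb, h, g1, g2⟩ | ⟨ha, -⟩)⟩
    · exact absurd ha (by simp)
    · rcases hb with hb | hb
      · exact Or.inl (by simpa using hb)
      · exact Or.inr (by simpa using hb)
    · exact absurd hb (by simp)
    · exact absurd ha (by simp)
  · rintro (rfl | rfl)
    · refine ⟨by simp, Or.inl (Or.inr ⟨?_, Or.inl rfl⟩)⟩; simp
    · refine ⟨by simp, Or.inl (Or.inr ⟨?_, Or.inr rfl⟩)⟩; simp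

lemma sd_adj_none_none : ¬ (subdivide1 G u v).Adj none none := by
  simp [subdivide1, SimpleGraph.fromRel_adj]

lemma sd_adj_some_none {a : V} :
    (subdivide1 G u v).Adj (some a) none ↔ a = u ∨ a = v :=
  ⟨fun h => sd_adj_none_some.mp h.symm, fun h => (sd_adj_none_some.mpr h).symm⟩

lemma sd_adj_some_cases {y : V} {z : Option V} (h : (subdivide1 G u v).Adj (some y) z) :
    (∃ b, z = some b ∧ G.Adj y b ∧ ¬(y = u ∧ b = v) ∧ ¬(y = v ∧ b = u)) ∨
      (z = none ∧ (y = u ∨ y = v)) := by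
  match z with
  | some b => exact Or.inl ⟨b, rfl, sd_adj_some_some.mp h⟩
  | none => exact Or.inr ⟨rfl, sd_adj_none_some.mp h.symm⟩

lemma subdivide1_comm : subdivide1 G u v = subdivide1 G v u := by
  ext x y
  match x, y with
  | some a, some b =>
      rw [sd_adj_some_some, sd_adj_some_some]
      tauto
  | some a, none =>
      rw [sd_adj_some_none, sd_adj_some_none]
      tauto
  | none, some b =>
      rw [sd_adj_none_some, sd_adj_none_some]
      tauto
  | none, none =>
      constructor
      · intro h; exact absurd h sd_adj_none_none
      · intro h; exact absurd h sd_adj_none_none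

lemma sd_nbrSet_other {a : V} (hau : a ≠ u) (hav : a ≠ v) :
    (subdivide1 G u v).neighborSet (some a) = some '' G.neighborSet a := by
  ext z
  simp only [SimpleGraph.mem_neighborSet, Set.mem_image]
  constructor
  · intro h
    rcases sd_adj_some_cases h with ⟨b, rfl, hb, -, -⟩ | ⟨-, (h1 | h1)⟩
    · exact ⟨b, hb, rfl⟩
    · exact absurd h1 hau
    · exact absurd h1 hav
  · rintro ⟨b, hb, rfl⟩
    exact sd_adj_some_some.mpr ⟨hb, fun hc => hau hc.1, fun hc => hav hc.1⟩

lemma sd_nbrSet_u (hne : u ≠ v) :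
    (subdivide1 G u v).neighborSet (some u) =
      insert none (some '' (G.neighborSet u \ {v})) := by
  ext z
  simp only [SimpleGraph.mem_neighborSet, Set.mem_insert_iff, Set.mem_image, Set.mem_diff,
    Set.mem_singleton_iff]
  constructor
  · intro h
    rcases sd_adj_some_cases h with ⟨b, rfl, hb, g1, -⟩ | ⟨rfl, -⟩
    · exact Or.inr ⟨b, ⟨hb, fun hc => g1 ⟨rfl, hc⟩⟩, rfl⟩
    · exact Or.inl rfl
  · rintro (rfl | ⟨b, ⟨hb, hbv⟩, rfl⟩)
    · exact sd_adj_some_none.mpr (Or.inl rfl)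
    · exact sd_adj_some_some.mpr ⟨hb, fun hc => hbv hc.2, fun hc => hne hc.1⟩

lemma sd_nbrSet_none :
    (subdivide1 G u v).neighborSet none = {some u, some v} := by
  ext z
  simp only [SimpleGraph.mem_neighborSet, Set.mem_insert_iff, Set.mem_singleton_iff]
  constructor
  · intro h
    match z with
    | some b =>
        rcases sd_adj_none_some.mp h with rfl | rfl
        · exact Or.inl rfl
        · exact Or.inr rfl
    | none => exact absurd h sd_adj_none_none
  · rintro (rfl | rfl)
    · exact sd_adj_none_some.mpr (Or.inl rfl)
    · exact sd_adj_none_some.mpr (Or.inr rfl)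

lemma numLeaves_subdivide1 [Finite V] (huv : G.Adj u v) :
    numLeaves (subdivide1 G u v) = numLeaves G := by
  have hne : u ≠ v := huv.ne
  have hinj : Function.Injective (some : V → Option V) := Option.some_injective V
  have hleaf : ∀ a : V, IsLeaf (subdivide1 G u v) (some a) ↔ IsLeaf G a := by
    intro a
    by_cases hau : a = u
    · subst hau
      unfold IsLeaf
      rw [sd_nbrSet_u hne, Set.ncard_insert_of_notMem (by simp) (Set.toFinite _),
        Set.ncard_image_of_injective _ hinj]
      have hd : (G.neighborSet a \ {v}).ncard = (G.neighborSet a).ncard - 1 :=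
        Set.ncard_diff_singleton_of_mem (huv : v ∈ G.neighborSet a)
      have hpos : 0 < (G.neighborSet a).ncard :=
        Set.ncard_pos (Set.toFinite _) |>.mpr ⟨v, huv⟩
      rw [hd]
      omega
    · by_cases hav : a = v
      · subst hav
        have hcomm : subdivide1 G u a = subdivide1 G a u := subdivide1_comm
        unfold IsLeaf
        rw [hcomm, sd_nbrSet_u (Ne.symm hne), Set.ncard_insert_of_notMem (by simp)
          (Set.toFinite _), Set.ncard_image_of_injective _ hinj]
        have hd : (G.neighborSet a \ {u}).ncard = (G.neighborSet a).ncard - 1 :=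
          Set.ncard_diff_singleton_of_mem (huv.symm : u ∈ G.neighborSet a)
        have hpos : 0 < (G.neighborSet a).ncard :=
          Set.ncard_pos (Set.toFinite _) |>.mpr ⟨u, huv.symm⟩
        rw [hd]
        omega
      · unfold IsLeaf
        rw [sd_nbrSet_other hau hav, Set.ncard_image_of_injective _ hinj]
  have hnone : ¬ IsLeaf (subdivide1 G u v) none := by
    unfold IsLeaf
    rw [sd_nbrSet_none, Set.ncard_pair (by simpa using hne)]
    omega
  have hset : {x | IsLeaf (subdivide1 G u v) x} = some '' {a | IsLeaf G a} := by
    ext z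
    simp only [Set.mem_setOf_eq, Set.mem_image]
    constructor
    · intro h
      match z with
      | none => exact absurd h hnone
      | some a => exact ⟨a, (hleaf a).mp h, rfl⟩
    · rintro ⟨a, ha, rfl⟩
      exact (hleaf a).mpr ha
  unfold numLeaves
  rw [hset, Set.ncard_image_of_injective _ hinj]

end Op1
section Op1b

variable {u v : V}

lemma three_le_ncard {α : Type*} {s : Set α} {a b c : α} (hab : a ≠ b) (hac : a ≠ c)
    (hbc : b ≠ c) (ha : a ∈ s) (hb : b ∈ s) (hc : c ∈ s) (hfin : s.Finite) : 3 ≤ s.ncard := by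
  have hsub : {a, b, c} ⊆ s := by rintro z (rfl | rfl | rfl) <;> assumption
  have h3 : ({a, b, c} : Set α).ncard = 3 := by
    rw [Set.ncard_insert_of_notMem (by simp [hab, hac]) (Set.toFinite _), Set.ncard_pair hbc]
  calc 3 = ({a, b, c} : Set α).ncard := h3.symm
    _ ≤ s.ncard := Set.ncard_le_ncard hsub hfin

lemma deg2_uniq [Finite V] (hdeg : (G.neighborSet u).ncard ≤ 2) (huv : G.Adj u v) :
    ∀ b c, G.Adj u b → G.Adj u c → b ≠ v → c ≠ v → b = c := by
  intro b c hb hc hbv hcv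
  by_contra hbc
  have hv' : v ∈ G.neighborSet u := by rwa [SimpleGraph.mem_neighborSet]
  have hb' : b ∈ G.neighborSet u := by rwa [SimpleGraph.mem_neighborSet]
  have hc' : c ∈ G.neighborSet u := by rwa [SimpleGraph.mem_neighborSet]
  have h3 := three_le_ncard (Ne.symm hbv) (Ne.symm hcv) hbc hv' hb' hc' (Set.toFinite _)
  omega

lemma sd_adj_u_none : (subdivide1 G u v).Adj (some u) none :=
  sd_adj_some_none.mpr (Or.inl rfl)

lemma sd_adj_v_none : (subdivide1 G u v).Adj (some v) none :=
  sd_adj_some_none.mpr (Or.inr rfl)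

/-- Case A of the subdivision transfer: `u ∉ S`. -/
lemma op1_A [Finite V] (huv : G.Adj u v) (hdeg : (G.neighborSet u).ncard ≤ 2)
    (huS : u ∉ S) (hS : IsTotalForcingSet G S) :
    IsTotalForcingSet (subdivide1 G u v) (some '' S) := by
  set T := subdivide1 G u v with hT
  have hne : u ≠ v := huv.ne
  have huniq := deg2_uniq hdeg huv
  have main : ∀ x, Forces G S x →
      Forces T (some '' S) (some x) ∧ (x = u → Forces T (some '' S) none) := by
    intro x hx
    induction hx with
    | mem h =>
        exact ⟨Forces.mem ⟨_, h, rfl⟩, fun hxu => absurd (hxu ▸ h) huS⟩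
    | @force y x hadj hy hall ihy ihall =>
        by_cases hyu : u = y
        · subst hyu
          by_cases hxv : v = x
          · subst hxv
            have hm : Forces T (some '' S) none := by
              refine Forces.force (u := some u) sd_adj_u_none ihy.1 ?_
              intro z hz hzne
              rcases sd_adj_some_cases hz with ⟨b, rfl, hb, hg1, -⟩ | ⟨rfl, -⟩
              · exact (ihall b hb (fun hc => hg1 ⟨rfl, hc⟩)).1
              · exact absurd rfl hzne
            refine ⟨?_, fun _ => hm⟩
            refine Forces.force (u := none) (sd_adj_none_some.mpr (Or.inr rfl)) hm ?_
            intro z hz hzne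
            have hz' : z ∈ T.neighborSet none := hz
            rw [hT, sd_nbrSet_none] at hz'
            rcases hz' with rfl | rfl
            · exact ihy.1
            · exact absurd rfl hzne
          · have hm : Forces T (some '' S) none := ihy.2 rfl
            have hxu' : x ≠ u := fun h => G.irrefl (h ▸ hadj)
            refine ⟨?_, fun hxu => absurd hxu hxu'⟩
            refine Forces.force (u := some u)
              (sd_adj_some_some.mpr ⟨hadj, fun hc => hxv hc.2.symm, fun hc => hne hc.1⟩)
              ihy.1 ?_
            intro z hz hzne
            rcases sd_adj_some_cases hz with ⟨b, rfl, hb, hg1, -⟩ | ⟨rfl, -⟩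
            · have hbv : b ≠ v := fun hc => hg1 ⟨rfl, hc⟩
              have hbx : b = x := huniq b x hb hadj hbv (fun hc => hxv hc.symm)
              exact absurd (by rw [hbx]) hzne
            · exact hm
        · by_cases hyv : v = y
          · subst hyv
            by_cases hxu : u = x
            · subst hxu
              have hm : Forces T (some '' S) none := by
                refine Forces.force (u := some v) sd_adj_v_none ihy.1 ?_
                intro z hz hzne
                rcases sd_adj_some_cases hz with ⟨b, rfl, hb, -, hg2⟩ | ⟨rfl, -⟩
                · exact (ihall b hb (fun hc => hg2 ⟨rfl, hc⟩)).1
                · exact absurd rfl hzne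
              refine ⟨?_, fun _ => hm⟩
              refine Forces.force (u := none) (sd_adj_none_some.mpr (Or.inl rfl)) hm ?_
              intro z hz hzne
              have hz' : z ∈ T.neighborSet none := hz
              rw [hT, sd_nbrSet_none] at hz'
              rcases hz' with rfl | rfl
              · exact absurd rfl hzne
              · exact ihy.1
            · have hm : Forces T (some '' S) none :=
                (ihall u huv.symm hxu).2 rfl
              refine ⟨?_, fun hxu2 => absurd hxu2.symm hxu⟩
              refine Forces.force (u := some v)
                (sd_adj_some_some.mpr ⟨hadj, fun hc => hne hc.1.symm,
                  fun hc => hxu hc.2.symm⟩) ihy.1 ?_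
              intro z hz hzne
              rcases sd_adj_some_cases hz with ⟨b, rfl, hb, -, hg2⟩ | ⟨rfl, -⟩
              · have hbu : b ≠ u := fun hc => hg2 ⟨rfl, hc⟩
                have hbx : b ≠ x := fun hc => hzne (by rw [hc])
                exact (ihall b hb hbx).1
              · exact hm
          · by_cases hxu : u = x
            · subst hxu
              have hFu : Forces T (some '' S) (some u) := by
                refine Forces.force (u := some y)
                  (sd_adj_some_some.mpr ⟨hadj, fun hc => hyu hc.1.symm,
                    fun hc => hyv hc.1.symm⟩) ihy.1 ?_
                intro z hz hzne
                rcases sd_adj_some_cases hz with ⟨b, rfl, hb, -, -⟩ | ⟨rfl, (h1 | h1)⟩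
                · have hbx : b ≠ u := fun hc => hzne (by rw [hc])
                  exact (ihall b hb hbx).1
                · exact absurd h1.symm hyu
                · exact absurd h1.symm hyv
              have hm : Forces T (some '' S) none := by
                refine Forces.force (u := some u) sd_adj_u_none hFu ?_
                intro z hz hzne
                rcases sd_adj_some_cases hz with ⟨b, rfl, hb, hg1, -⟩ | ⟨rfl, -⟩
                · have hbv : b ≠ v := fun hc => hg1 ⟨rfl, hc⟩
                  have hby : b = y := huniq b y hb hadj.symm hbv (fun hc => hyv hc.symm)
                  subst hby
                  exact ihy.1
                · exact absurd rfl hzne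
              exact ⟨hFu, fun _ => hm⟩
            · refine ⟨?_, fun h => absurd h.symm hxu⟩
              refine Forces.force (u := some y)
                (sd_adj_some_some.mpr ⟨hadj, fun hc => hyu hc.1.symm,
                  fun hc => hyv hc.1.symm⟩) ihy.1 ?_
              intro z hz hzne
              rcases sd_adj_some_cases hz with ⟨b, rfl, hb, -, -⟩ | ⟨rfl, (h1 | h1)⟩
              · have hbx : b ≠ x := fun hc => hzne (by rw [hc])
                exact (ihall b hb hbx).1
              · exact absurd h1.symm hyu
              · exact absurd h1.symm hyv
  constructor
  · intro z
    match z with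
    | some a => exact (main a (hS.1 a)).1
    | none => exact (main u (hS.1 u)).2 rfl
  · rintro z ⟨s, hs, rfl⟩
    obtain ⟨t, htS, hst⟩ := hS.2 s hs
    have hsu : s ≠ u := fun h => huS (h ▸ hs)
    have htu : t ≠ u := fun h => huS (h ▸ htS)
    exact ⟨some t, ⟨t, htS, rfl⟩,
      sd_adj_some_some.mpr ⟨hst, fun hc => hsu hc.1, fun hc => htu hc.2⟩⟩

end Op1b
section Op1c

variable {u v : V}

/-- Case B: `u ∈ S`, `v ∉ S`. -/
lemma op1_B [Finite V] (huv : G.Adj u v) (hdeg : (G.neighborSet u).ncard ≤ 2)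
    (huS : u ∈ S) (hvS : v ∉ S) (hS : IsTotalForcingSet G S) :
    IsTotalForcingSet (subdivide1 G u v) (some '' S) := by
  set T := subdivide1 G u v with hT
  have hne : u ≠ v := huv.ne
  have huniq := deg2_uniq hdeg huv
  obtain ⟨p, hpS, hup⟩ : ∃ p, p ∈ S ∧ G.Adj u p := by
    obtain ⟨t, htS, hut⟩ := hS.2 u huS
    exact ⟨t, htS, hut⟩
  have hpv : p ≠ v := fun h => hvS (h ▸ hpS)
  have hm : Forces T (some '' S) none := by
    refine Forces.force (u := some u) sd_adj_u_none (Forces.mem ⟨u, huS, rfl⟩) ?_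
    intro z hz hzne
    rcases sd_adj_some_cases hz with ⟨b, rfl, hb, hg1, -⟩ | ⟨rfl, -⟩
    · have hbv : b ≠ v := fun hc => hg1 ⟨rfl, hc⟩
      have hbp : b = p := huniq b p hb hup hbv hpv
      exact Forces.mem ⟨p, hpS, by rw [hbp]⟩
    · exact absurd rfl hzne
  have main : ∀ x, Forces G S x → Forces T (some '' S) (some x) := by
    intro x hx
    induction hx with
    | mem h => exact Forces.mem ⟨_, h, rfl⟩
    | @force y x hadj hy hall ihy ihall =>
        by_cases hyu : u = y
        · subst hyu
          by_cases hxv : v = x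
          · subst hxv
            refine Forces.force (u := none) (sd_adj_none_some.mpr (Or.inr rfl)) hm ?_
            intro z hz hzne
            have hz' : z ∈ T.neighborSet none := hz
            rw [hT, sd_nbrSet_none] at hz'
            rcases hz' with rfl | rfl
            · exact Forces.mem ⟨u, huS, rfl⟩
            · exact absurd rfl hzne
          · refine Forces.force (u := some u)
              (sd_adj_some_some.mpr ⟨hadj, fun hc => hxv hc.2.symm, fun hc => hne hc.1⟩)
              (Forces.mem ⟨u, huS, rfl⟩) ?_
            intro z hz hzne
            rcases sd_adj_some_cases hz with ⟨b, rfl, hb, hg1, -⟩ | ⟨rfl, -⟩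
            · have hbv : b ≠ v := fun hc => hg1 ⟨rfl, hc⟩
              have hbx : b = x := huniq b x hb hadj hbv (fun hc => hxv hc.symm)
              exact absurd (by rw [hbx]) hzne
            · exact hm
        · by_cases hyv : v = y
          · subst hyv
            by_cases hxu : u = x
            · exact hxu ▸ Forces.mem ⟨u, huS, rfl⟩
            · refine Forces.force (u := some v)
                (sd_adj_some_some.mpr ⟨hadj, fun hc => hne hc.1.symm,
                  fun hc => hxu hc.2.symm⟩) ihy ?_
              intro z hz hzne
              rcases sd_adj_some_cases hz with ⟨b, rfl, hb, -, hg2⟩ | ⟨rfl, -⟩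
              · exact ihall b hb (fun hc => hzne (by rw [hc]))
              · exact hm
          · refine Forces.force (u := some y)
              (sd_adj_some_some.mpr ⟨hadj, fun hc => hyu hc.1.symm,
                fun hc => hyv hc.1.symm⟩) ihy ?_
            intro z hz hzne
            rcases sd_adj_some_cases hz with ⟨b, rfl, hb, -, -⟩ | ⟨rfl, (h1 | h1)⟩
            · exact ihall b hb (fun hc => hzne (by rw [hc]))
            · exact absurd h1.symm hyu
            · exact absurd h1.symm hyv
  constructor
  · intro z
    match z with
    | some a => exact main a (hS.1 a)
    | none => exact hm
  · rintro z ⟨s, hs, rfl⟩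
    by_cases hsu : s = u
    · subst hsu
      exact ⟨some p, ⟨p, hpS, rfl⟩,
        sd_adj_some_some.mpr ⟨hup, fun hc => hpv hc.2, fun hc => hne hc.1⟩⟩
    · obtain ⟨t, htS, hst⟩ := hS.2 s hs
      have htv : t ≠ v := fun h => hvS (h ▸ htS)
      have hsv : s ≠ v := fun h => hvS (h ▸ hs)
      exact ⟨some t, ⟨t, htS, rfl⟩,
        sd_adj_some_some.mpr ⟨hst, fun hc => htv hc.2, fun hc => hsv hc.1⟩⟩

/-- Case C: `u, v ∈ S` and `u` is the only `S`-neighbor of `v`. -/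
lemma op1_C [Finite V] (huv : G.Adj u v)
    (huS : u ∈ S) (hvS : v ∈ S)
    (hvonly : ∀ t ∈ S, G.Adj v t → t = u) (hS : IsTotalForcingSet G S) :
    IsTotalForcingSet (subdivide1 G u v) (insert none (some '' (S \ {v}))) := by
  set T := subdivide1 G u v with hT
  have hne : u ≠ v := huv.ne
  set S' : Set (Option V) := insert none (some '' (S \ {v})) with hS'
  have hu' : (some u) ∈ S' := Set.mem_insert_of_mem _
    ⟨u, ⟨huS, fun hc => hne (Set.mem_singleton_iff.mp hc)⟩, rfl⟩
  have hFv : Forces T S' (some v) := by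
    refine Forces.force (u := none) (sd_adj_none_some.mpr (Or.inr rfl))
      (Forces.mem (Set.mem_insert _ _)) ?_
    intro z hz hzne
    have hz' : z ∈ T.neighborSet none := hz
    rw [hT, sd_nbrSet_none] at hz'
    rcases hz' with rfl | rfl
    · exact Forces.mem hu'
    · exact absurd rfl hzne
  have main : ∀ x, Forces G S x → Forces T S' (some x) := by
    intro x hx
    induction hx with
    | @mem x h =>
        by_cases hxv : v = x
        · exact hxv ▸ hFv
        · exact Forces.mem (Set.mem_insert_of_mem _
            ⟨x, ⟨h, fun hc => hxv (Set.mem_singleton_iff.mp hc).symm⟩, rfl⟩)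
    | @force y x hadj hy hall ihy ihall =>
        by_cases hyu : u = y
        · subst hyu
          by_cases hxv : v = x
          · exact hxv ▸ hFv
          · refine Forces.force (u := some u)
              (sd_adj_some_some.mpr ⟨hadj, fun hc => hxv hc.2.symm, fun hc => hne hc.1⟩)
              (Forces.mem hu') ?_
            intro z hz hzne
            rcases sd_adj_some_cases hz with ⟨b, rfl, hb, hg1, -⟩ | ⟨rfl, -⟩
            · have hbv : b ≠ v := fun hc => hg1 ⟨rfl, hc⟩
              by_cases hbx : b = x
              · exact absurd (by rw [hbx]) hzne
              · exact ihall b hb hbx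
            · exact Forces.mem (Set.mem_insert _ _)
        · by_cases hyv : v = y
          · subst hyv
            by_cases hxu : u = x
            · exact hxu ▸ Forces.mem hu'
            · refine Forces.force (u := some v)
                (sd_adj_some_some.mpr ⟨hadj, fun hc => hne hc.1.symm,
                  fun hc => hxu hc.2.symm⟩) hFv ?_
              intro z hz hzne
              rcases sd_adj_some_cases hz with ⟨b, rfl, hb, -, hg2⟩ | ⟨rfl, -⟩
              · exact ihall b hb (fun hc => hzne (by rw [hc]))
              · exact Forces.mem (Set.mem_insert _ _)
          · refine Forces.force (u := some y)
              (sd_adj_some_some.mpr ⟨hadj, fun hc => hyu hc.1.symm,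
                fun hc => hyv hc.1.symm⟩) ihy ?_
            intro z hz hzne
            rcases sd_adj_some_cases hz with ⟨b, rfl, hb, -, -⟩ | ⟨rfl, (h1 | h1)⟩
            · exact ihall b hb (fun hc => hzne (by rw [hc]))
            · exact absurd h1.symm hyu
            · exact absurd h1.symm hyv
  constructor
  · intro z
    match z with
    | some a => exact main a (hS.1 a)
    | none => exact Forces.mem (Set.mem_insert _ _)
  · rintro z (rfl | ⟨s, ⟨hs, hsv⟩, rfl⟩)
    · exact ⟨some u, hu', sd_adj_none_some.mpr (Or.inl rfl)⟩
    · have hsv' : s ≠ v := fun h => hsv (Set.mem_singleton_iff.mpr h)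
      by_cases hsu : s = u
      · subst hsu
        exact ⟨none, Set.mem_insert _ _, sd_adj_u_none⟩
      · obtain ⟨t, htS, hst⟩ := hS.2 s hs
        have htv : t ≠ v := by
          intro h
          exact hsu (hvonly s hs (h ▸ hst).symm)
        exact ⟨some t, Set.mem_insert_of_mem _
          ⟨t, ⟨htS, fun hc => htv (Set.mem_singleton_iff.mp hc)⟩, rfl⟩,
          sd_adj_some_some.mpr ⟨hst, fun hc => htv hc.2, fun hc => hsv' hc.1⟩⟩

/-- Case D: `u, v ∈ S`, `v` has an `S`-neighbor other than `u`, and `u` has an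
`S`-neighbor other than `v`. -/
lemma op1_D [Finite V] (huv : G.Adj u v) (hdeg : (G.neighborSet u).ncard ≤ 2)
    (huS : u ∈ S) (hvS : v ∈ S) {w0 p : V}
    (hw0S : w0 ∈ S) (hw0u : w0 ≠ u) (hvw0 : G.Adj v w0)
    (hpS : p ∈ S) (hpv : p ≠ v) (hup : G.Adj u p)
    (hS : IsTotalForcingSet G S) :
    IsTotalForcingSet (subdivide1 G u v) (some '' S) := by
  set T := subdivide1 G u v with hT
  have hne : u ≠ v := huv.ne
  have huniq := deg2_uniq hdeg huv
  have hm : Forces T (some '' S) none := by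
    refine Forces.force (u := some u) sd_adj_u_none (Forces.mem ⟨u, huS, rfl⟩) ?_
    intro z hz hzne
    rcases sd_adj_some_cases hz with ⟨b, rfl, hb, hg1, -⟩ | ⟨rfl, -⟩
    · have hbv : b ≠ v := fun hc => hg1 ⟨rfl, hc⟩
      have hbp : b = p := huniq b p hb hup hbv hpv
      exact Forces.mem ⟨p, hpS, by rw [hbp]⟩
    · exact absurd rfl hzne
  have main : ∀ x, Forces G S x → Forces T (some '' S) (some x) := by
    intro x hx
    induction hx with
    | mem h => exact Forces.mem ⟨_, h, rfl⟩
    | @force y x hadj hy hall ihy ihall =>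
        by_cases hyu : u = y
        · subst hyu
          by_cases hxv : v = x
          · exact hxv ▸ Forces.mem ⟨v, hvS, rfl⟩
          · refine Forces.force (u := some u)
              (sd_adj_some_some.mpr ⟨hadj, fun hc => hxv hc.2.symm, fun hc => hne hc.1⟩)
              (Forces.mem ⟨u, huS, rfl⟩) ?_
            intro z hz hzne
            rcases sd_adj_some_cases hz with ⟨b, rfl, hb, hg1, -⟩ | ⟨rfl, -⟩
            · have hbv : b ≠ v := fun hc => hg1 ⟨rfl, hc⟩
              have hbx : b = x := huniq b x hb hadj hbv (fun hc => hxv hc.symm)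
              exact absurd (by rw [hbx]) hzne
            · exact hm
        · by_cases hyv : v = y
          · subst hyv
            by_cases hxu : u = x
            · exact hxu ▸ Forces.mem ⟨u, huS, rfl⟩
            · refine Forces.force (u := some v)
                (sd_adj_some_some.mpr ⟨hadj, fun hc => hne hc.1.symm,
                  fun hc => hxu hc.2.symm⟩) (Forces.mem ⟨v, hvS, rfl⟩) ?_
              intro z hz hzne
              rcases sd_adj_some_cases hz with ⟨b, rfl, hb, -, hg2⟩ | ⟨rfl, -⟩
              · exact ihall b hb (fun hc => hzne (by rw [hc]))
              · exact hm
          · refine Forces.force (u := some y)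
              (sd_adj_some_some.mpr ⟨hadj, fun hc => hyu hc.1.symm,
                fun hc => hyv hc.1.symm⟩) ihy ?_
            intro z hz hzne
            rcases sd_adj_some_cases hz with ⟨b, rfl, hb, -, -⟩ | ⟨rfl, (h1 | h1)⟩
            · exact ihall b hb (fun hc => hzne (by rw [hc]))
            · exact absurd h1.symm hyu
            · exact absurd h1.symm hyv
  constructor
  · intro z
    match z with
    | some a => exact main a (hS.1 a)
    | none => exact hm
  · rintro z ⟨s, hs, rfl⟩
    by_cases hsu : s = u
    · subst hsu
      exact ⟨some p, ⟨p, hpS, rfl⟩,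
        sd_adj_some_some.mpr ⟨hup, fun hc => hpv hc.2, fun hc => hne hc.1⟩⟩
    · by_cases hsv : s = v
      · subst hsv
        exact ⟨some w0, ⟨w0, hw0S, rfl⟩,
          sd_adj_some_some.mpr ⟨hvw0, fun hc => hne hc.1.symm, fun hc => hw0u hc.2⟩⟩
      · obtain ⟨t, htS, hst⟩ := hS.2 s hs
        exact ⟨some t, ⟨t, htS, rfl⟩,
          sd_adj_some_some.mpr ⟨hst, fun hc => hsu hc.1, fun hc => hsv hc.1⟩⟩

/-- Case E: `u, v ∈ S`, `v` has an `S`-neighbor other than `u`, and no neighbor of `u`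
other than `v` lies in `S`. -/
lemma op1_E [Finite V] (huv : G.Adj u v) (hdeg : (G.neighborSet u).ncard ≤ 2)
    (huS : u ∈ S) (hvS : v ∈ S) {w0 : V}
    (hw0S : w0 ∈ S) (hw0u : w0 ≠ u) (hvw0 : G.Adj v w0)
    (hp : ∀ b, G.Adj u b → b ≠ v → b ∉ S)
    (hS : IsTotalForcingSet G S) :
    IsTotalForcingSet (subdivide1 G u v) (insert none (some '' (S \ {u}))) := by
  set T := subdivide1 G u v with hT
  have hne : u ≠ v := huv.ne
  have huniq := deg2_uniq hdeg huv
  set S' : Set (Option V) := insert none (some '' (S \ {u})) with hS'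
  have hv' : (some v) ∈ S' := Set.mem_insert_of_mem _
    ⟨v, ⟨hvS, fun hc => hne (Set.mem_singleton_iff.mp hc).symm⟩, rfl⟩
  have hFu : Forces T S' (some u) := by
    refine Forces.force (u := none) (sd_adj_none_some.mpr (Or.inl rfl))
      (Forces.mem (Set.mem_insert _ _)) ?_
    intro z hz hzne
    have hz' : z ∈ T.neighborSet none := hz
    rw [hT, sd_nbrSet_none] at hz'
    rcases hz' with rfl | rfl
    · exact absurd rfl hzne
    · exact Forces.mem hv'
  have main : ∀ x, Forces G S x → Forces T S' (some x) := by
    intro x hx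
    induction hx with
    | @mem x h =>
        by_cases hxu : u = x
        · exact hxu ▸ hFu
        · exact Forces.mem (Set.mem_insert_of_mem _
            ⟨x, ⟨h, fun hc => hxu (Set.mem_singleton_iff.mp hc).symm⟩, rfl⟩)
    | @force y x hadj hy hall ihy ihall =>
        by_cases hyu : u = y
        · subst hyu
          by_cases hxv : v = x
          · exact hxv ▸ Forces.mem hv'
          · refine Forces.force (u := some u)
              (sd_adj_some_some.mpr ⟨hadj, fun hc => hxv hc.2.symm, fun hc => hne hc.1⟩)
              hFu ?_
            intro z hz hzne
            rcases sd_adj_some_cases hz with ⟨b, rfl, hb, hg1, -⟩ | ⟨rfl, -⟩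
            · have hbv : b ≠ v := fun hc => hg1 ⟨rfl, hc⟩
              have hbx : b = x := huniq b x hb hadj hbv (fun hc => hxv hc.symm)
              exact absurd (by rw [hbx]) hzne
            · exact Forces.mem (Set.mem_insert _ _)
        · by_cases hyv : v = y
          · subst hyv
            by_cases hxu : u = x
            · exact hxu ▸ hFu
            · refine Forces.force (u := some v)
                (sd_adj_some_some.mpr ⟨hadj, fun hc => hne hc.1.symm,
                  fun hc => hxu hc.2.symm⟩) (Forces.mem hv') ?_
              intro z hz hzne
              rcases sd_adj_some_cases hz with ⟨b, rfl, hb, -, hg2⟩ | ⟨rfl, -⟩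
              · exact ihall b hb (fun hc => hzne (by rw [hc]))
              · exact Forces.mem (Set.mem_insert _ _)
          · refine Forces.force (u := some y)
              (sd_adj_some_some.mpr ⟨hadj, fun hc => hyu hc.1.symm,
                fun hc => hyv hc.1.symm⟩) ihy ?_
            intro z hz hzne
            rcases sd_adj_some_cases hz with ⟨b, rfl, hb, -, -⟩ | ⟨rfl, (h1 | h1)⟩
            · exact ihall b hb (fun hc => hzne (by rw [hc]))
            · exact absurd h1.symm hyu
            · exact absurd h1.symm hyv
  constructor
  · intro z
    match z with
    | some a => exact main a (hS.1 a)
    | none => exact Forces.mem (Set.mem_insert _ _)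
  · rintro z (rfl | ⟨s, ⟨hs, hsu⟩, rfl⟩)
    · exact ⟨some v, hv', sd_adj_none_some.mpr (Or.inr rfl)⟩
    · have hsu' : s ≠ u := fun h => hsu (Set.mem_singleton_iff.mpr h)
      by_cases hsv : s = v
      · subst hsv
        exact ⟨some w0, Set.mem_insert_of_mem _
          ⟨w0, ⟨hw0S, fun hc => hw0u (Set.mem_singleton_iff.mp hc)⟩, rfl⟩,
          sd_adj_some_some.mpr ⟨hvw0, fun hc => hne hc.1.symm, fun hc => hw0u hc.2⟩⟩
      · obtain ⟨t, htS, hst⟩ := hS.2 s hs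
        have htu : t ≠ u := by
          intro h
          exact hp s (h ▸ hst).symm hsv hs
        exact ⟨some t, Set.mem_insert_of_mem _
          ⟨t, ⟨htS, fun hc => htu (Set.mem_singleton_iff.mp hc)⟩, rfl⟩,
          sd_adj_some_some.mpr ⟨hst, fun hc => hsu' hc.1, fun hc => htu hc.2⟩⟩

end Op1c
section Assembly

lemma op1_combined [Finite V] {u v : V} (huv : G.Adj u v)
    (hdeg : (G.neighborSet u).ncard ≤ 2)
    (hS : IsTotalForcingSet G S) (hfin : S.Finite) :
    ∃ S' : Set (Option V), S'.Finite ∧ IsTotalForcingSet (subdivide1 G u v) S' ∧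
      S'.ncard = S.ncard := by
  classical
  have hne := huv.ne
  have himg : (some '' S).ncard = S.ncard :=
    Set.ncard_image_of_injective _ (Option.some_injective V)
  by_cases huS : u ∈ S
  · by_cases hvS : v ∈ S
    · by_cases hvonly : ∀ t ∈ S, G.Adj v t → t = u
      · refine ⟨_, ?_, op1_C huv huS hvS hvonly hS, ?_⟩
        · exact (Set.toFinite _)
        · rw [Set.ncard_insert_of_notMem (by simp) (Set.toFinite _),
            Set.ncard_image_of_injective _ (Option.some_injective V),
            Set.ncard_diff_singleton_of_mem hvS]
          have : 0 < S.ncard := Set.ncard_pos hfin |>.mpr ⟨v, hvS⟩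
          omega
      · push_neg at hvonly
        obtain ⟨w0, hw0S, hvw0, hw0u⟩ := hvonly
        by_cases hp : ∃ p, G.Adj u p ∧ p ≠ v ∧ p ∈ S
        · obtain ⟨p, hup, hpv, hpS⟩ := hp
          exact ⟨_, Set.toFinite _,
            op1_D huv hdeg huS hvS hw0S hw0u hvw0 hpS hpv hup hS, himg⟩
        · push_neg at hp
          have hp' : ∀ b, G.Adj u b → b ≠ v → b ∉ S := fun b hb hbv hbS => hp b hb hbv hbS
          refine ⟨_, Set.toFinite _, op1_E huv hdeg huS hvS hw0S hw0u hvw0 hp' hS, ?_⟩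
          rw [Set.ncard_insert_of_notMem (by simp) (Set.toFinite _),
            Set.ncard_image_of_injective _ (Option.some_injective V),
            Set.ncard_diff_singleton_of_mem huS]
          have : 0 < S.ncard := Set.ncard_pos hfin |>.mpr ⟨u, huS⟩
          omega
    · exact ⟨_, Set.toFinite _, op1_B huv hdeg huS hvS hS, himg⟩
  · exact ⟨_, Set.toFinite _, op1_A huv hdeg huS hS, himg⟩

lemma pathGraph2_nbrSet (i : Fin 2) :
    (SimpleGraph.pathGraph 2).neighborSet i = {1 - i} := by
  ext z
  simp only [SimpleGraph.mem_neighborSet, SimpleGraph.pathGraph_adj, Set.mem_singleton_iff]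
  fin_cases i <;> fin_cases z <;> simp <;> decide

lemma numLeaves_pathGraph2 : numLeaves (SimpleGraph.pathGraph 2) = 2 := by
  have hleaf : ∀ i : Fin 2, IsLeaf (SimpleGraph.pathGraph 2) i := by
    intro i
    unfold IsLeaf
    rw [pathGraph2_nbrSet]
    exact Set.ncard_singleton _
  have hset : {v : Fin 2 | IsLeaf (SimpleGraph.pathGraph 2) v} = Set.univ := by
    ext i
    simp [hleaf i]
  rw [numLeaves, hset]
  simp [Set.ncard_univ]

lemma pathGraph2_TF : IsTotalForcingSet (SimpleGraph.pathGraph 2) (Set.univ) := by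
  constructor
  · intro x
    exact Forces.mem (Set.mem_univ x)
  · intro x _
    refine ⟨1 - x, Set.mem_univ _, ?_⟩
    have : (1 - x) ∈ (SimpleGraph.pathGraph 2).neighborSet x := by
      rw [pathGraph2_nbrSet]
      rfl
    exact this

/-- Main upper bound: every member of the family has a total forcing set of size
equal to its number of leaves. -/
lemma upper_main : ∀ {V : Type} {G : SimpleGraph V}, InFamilyF G →
    Finite V ∧ ∃ S : Set V, S.Finite ∧ IsTotalForcingSet G S ∧ S.ncard = numLeaves G := by
  intro V G h
  induction h with
  | base =>
      refine ⟨inferInstance, Set.univ, Set.toFinite _, pathGraph2_TF, ?_⟩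
      rw [numLeaves_pathGraph2]
      simp [Set.ncard_univ]
  | @iso V W G H hG e ih =>
      obtain ⟨hfin, S, hSfin, hTF, hcard⟩ := ih
      haveI : Finite V := hfin
      haveI := Fintype.ofFinite V
      refine ⟨Finite.of_equiv V e.toEquiv, e '' S, hSfin.image _, hTF.map e, ?_⟩
      rw [Set.ncard_image_of_injective _ e.injective, hcard, numLeaves_map e]
  | @op1 V G u v hG hadj hdeg ih =>
      obtain ⟨hfin, S, hSfin, hTF, hcard⟩ := ih
      haveI : Finite V := hfin
      haveI := Fintype.ofFinite V
      refine ⟨inferInstance, ?_⟩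
      rcases hdeg with hdeg | hdeg
      · obtain ⟨S', hS'fin, hS'TF, hS'card⟩ := op1_combined hadj hdeg hTF hSfin
        exact ⟨S', hS'fin, hS'TF, by rw [hS'card, hcard, numLeaves_subdivide1 hadj]⟩
      · obtain ⟨S', hS'fin, hS'TF, hS'card⟩ := op1_combined hadj.symm hdeg hTF hSfin
        rw [← subdivide1_comm] at hS'TF
        exact ⟨S', hS'fin, hS'TF, by rw [hS'card, hcard, numLeaves_subdivide1 hadj]⟩
  | @op2 V G v hG hv ih =>
      obtain ⟨hfin, S, hSfin, hTF, hcard⟩ := ih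
      haveI : Finite V := hfin
      haveI := Fintype.ofFinite V
      refine ⟨inferInstance, insert none (some '' S), Set.toFinite _, op2_TF hTF hv, ?_⟩
      rw [Set.ncard_insert_of_notMem (by simp) (Set.toFinite _),
        Set.ncard_image_of_injective _ (Option.some_injective V), hcard,
        numLeaves_addLeaf hv.two_le]
  | @op3 V G w v hG hw hwv hv ih =>
      obtain ⟨hfin, S, hSfin, hTF, hcard⟩ := ih
      haveI : Finite V := hfin
      haveI := Fintype.ofFinite V
      obtain ⟨S₂, hS₂TF, hS₂card, hvS₂, hwS₂⟩ := exists_TF_containing_leaf hTF hw hv hwv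
      have hnbrS : ∀ b, G.Adj v b → b ∈ S₂ := by
        intro b hb
        have : b = w := hv.eq_of_adj hb hwv.symm
        exact this ▸ hwS₂
      refine ⟨inferInstance, insert (Sum.inr 0) (Sum.inl '' S₂), Set.toFinite _,
        op3_TF hS₂TF hvS₂ hv hnbrS, ?_⟩
      rw [Set.ncard_insert_of_notMem (by simp) (Set.toFinite _),
        Set.ncard_image_of_injective _ Sum.inl_injective, hS₂card, hcard,
        numLeaves_addTwoLeaves hv]
  | @op4 V G v hG hv ih =>
      obtain ⟨hfin, S, hSfin, hTF, hcard⟩ := ih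
      haveI : Finite V := hfin
      haveI := Fintype.ofFinite V
      refine ⟨inferInstance, insert (Sum.inr 0) (insert (Sum.inr 1) (Sum.inl '' S)),
        Set.toFinite _, op4_TF hTF, ?_⟩
      rw [Set.ncard_insert_of_notMem (by simp) (Set.toFinite _),
        Set.ncard_insert_of_notMem (by simp) (Set.toFinite _),
        Set.ncard_image_of_injective _ Sum.inl_injective, hcard, numLeaves_addP3 hv]
  | @op5 V G v hG hv ih =>
      obtain ⟨hfin, S, hSfin, hTF, hcard⟩ := ih
      haveI : Finite V := hfin
      haveI := Fintype.ofFinite V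
      refine ⟨inferInstance,
        insert (Sum.inr 2) (insert (Sum.inr 3) (insert (Sum.inr 4) (Sum.inl '' S))),
        Set.toFinite _, op5_TF hTF, ?_⟩
      rw [Set.ncard_insert_of_notMem (by simp) (Set.toFinite _),
        Set.ncard_insert_of_notMem (by simp) (Set.toFinite _),
        Set.ncard_insert_of_notMem (by simp) (Set.toFinite _),
        Set.ncard_image_of_injective _ Sum.inl_injective, hcard,
        numLeaves_addSubdividedStar hv]

end Assembly
/-- If `T` is a tree in the family `ℱ` with `n₁` leaves, then
`F_t(T) = n₁`. -/
theorem stmt8 {V : Type} [Fintype V] (T : SimpleGraph V)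
    (hT : T.IsTree) (hmem : InFamilyF T) :
    totalForcingNumber T = numLeaves T := by
  obtain ⟨-, S, hSfin, hTF, hcard⟩ := upper_main hmem
  have hmemN : numLeaves T ∈ {n : ℕ | ∃ S : Finset V, S.card = n ∧ IsTotalForcingSet T ↑S} := by
    refine ⟨hSfin.toFinset, ?_, ?_⟩
    · rw [← hcard]
      exact (Set.ncard_eq_toFinset_card S hSfin).symm
    · rwa [Set.Finite.coe_toFinset]
  apply le_antisymm
  · exact Nat.sInf_le hmemN
  · obtain ⟨S₀, hS₀card, hS₀TF⟩ := Nat.sInf_mem ⟨_, hmemN⟩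
    have := hS₀TF.numLeaves_le
    rwa [Set.ncard_coe_finset, hS₀card] at this

end TotalForcing
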